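/- For every n ≥ 5, the number of equivalence classes under ≈ of redundant two-layer comparator networks on n channels with first layer F_n equals |R(G_{n−2})|, the number of equivalence classes under ≈ of all two-layer comparator networks on n−2 channels with first layer F_{n−2}. -/

import Mathlib

namespace SN

open scoped Classical

/-- A comparator on `n` channels: a pair of channels. -/
abbrev Comp (n : ℕ) := Fin n × Fin n

/-- A layer is a finite set of comparators. -/
abbrev Layer (n : ℕ) := Finset (Comp n)

/-- A comparator network is a sequence (list) of layers; its depth is the length. -/
abbrev Net (n : ℕ) := List (Layer n)

/-- Each channel is used by at most one comparator of the layer. -/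
def NoOverlap {n : ℕ} (L : Layer n) : Prop :=
  ∀ c ∈ L, ∀ c' ∈ L, c ≠ c' →
    c.1 ≠ c'.1 ∧ c.1 ≠ c'.2 ∧ c.2 ≠ c'.1 ∧ c.2 ≠ c'.2

/-- A (standard) layer: comparators `(i,j)` with `i < j`, channels pairwise disjoint. -/
def IsLayer {n : ℕ} (L : Layer n) : Prop :=
  (∀ c ∈ L, c.1 < c.2) ∧ NoOverlap L

/-- A generalized layer: comparators `(i,j)` with `i ≠ j` allowed in any order. -/
def IsGenLayer {n : ℕ} (L : Layer n) : Prop :=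
  (∀ c ∈ L, c.1 ≠ c.2) ∧ NoOverlap L

def IsNet {n : ℕ} (C : Net n) : Prop := ∀ L ∈ C, IsLayer L

def IsGenNet {n : ℕ} (C : Net n) : Prop := ∀ L ∈ C, IsGenLayer L

/-- Apply one layer to a Boolean vector: a comparator `(i,j)` puts the min
(`&&`) on channel `i` and the max (`||`) on channel `j`. -/
noncomputable def applyLayer {n : ℕ} (L : Layer n) (x : Fin n → Bool) : Fin n → Bool :=
  fun k =>
    if h1 : ∃ c ∈ L, c.1 = k then x h1.choose.1 && x h1.choose.2
    else if h2 : ∃ c ∈ L, c.2 = k then x h2.choose.1 || x h2.choose.2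
    else x k

/-- Run a comparator network on a Boolean input (layers applied in sequence). -/
noncomputable def run {n : ℕ} (C : Net n) (x : Fin n → Bool) : Fin n → Bool :=
  C.foldl (fun y L => applyLayer L y) x

/-- Ascendingly sorted Boolean vector. -/
def BSorted {n : ℕ} (x : Fin n → Bool) : Prop :=
  ∀ i j : Fin n, i ≤ j → x i ≤ x j

/-- A sorting network: a comparator network sorting every Boolean input. -/
def IsSortingNet {n : ℕ} (C : Net n) : Prop :=
  IsNet C ∧ ∀ x : Fin n → Bool, BSorted (run C x)

/-- The set of outputs of a network on all Boolean inputs. -/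
def outputs {n : ℕ} (C : Net n) : Set (Fin n → Bool) := Set.range (run C)

/-- Apply one layer to a vector of naturals. -/
noncomputable def applyLayerN {n : ℕ} (L : Layer n) (x : Fin n → ℕ) : Fin n → ℕ :=
  fun k =>
    if h1 : ∃ c ∈ L, c.1 = k then min (x h1.choose.1) (x h1.choose.2)
    else if h2 : ∃ c ∈ L, c.2 = k then max (x h2.choose.1) (x h2.choose.2)
    else x k

noncomputable def runN {n : ℕ} (C : Net n) (x : Fin n → ℕ) : Fin n → ℕ :=
  C.foldl (fun y L => applyLayerN L y) x

def NSorted {n : ℕ} (x : Fin n → ℕ) : Prop :=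
  ∀ i j : Fin n, i ≤ j → x i ≤ x j

/-- Permute the coordinates of a Boolean vector by `π` (channel `k`'s value
moves to channel `π k`). -/
def permVec {n : ℕ} (π : Equiv.Perm (Fin n)) (x : Fin n → Bool) : Fin n → Bool :=
  fun i => x (π.symm i)

/-- The image of a set of Boolean vectors under coordinate permutation by `π`. -/
def permSet {n : ℕ} (π : Equiv.Perm (Fin n)) (X : Set (Fin n → Bool)) :
    Set (Fin n → Bool) :=
  permVec π '' X

/-- The image `π(L)` of a layer under a permutation of channels. -/
def permLayer {n : ℕ} (π : Equiv.Perm (Fin n)) (L : Layer n) : Layer n :=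
  L.image fun c => (π c.1, π c.2)

/-- Channel `i` is used by some comparator of the layer `L`. -/
def usedIn {n : ℕ} (L : Layer n) (i : Fin n) : Prop := ∃ c ∈ L, c.1 = i ∨ c.2 = i

/-- Channels `i` and `j` are joined by a comparator of `L`. -/
def Joined {n : ℕ} (L : Layer n) (i j : Fin n) : Prop := (i, j) ∈ L ∨ (j, i) ∈ L

/-- `i` is the smaller channel of some comparator of `L` (a min-channel). -/
def MinChan {n : ℕ} (L : Layer n) (i : Fin n) : Prop := ∃ c ∈ L, c.1 = i

/-- `i` is the larger channel of some comparator of `L` (a max-channel). -/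
def MaxChan {n : ℕ} (L : Layer n) (i : Fin n) : Prop := ∃ c ∈ L, c.2 = i

/-- A two-layer network `[L1, L2]` is redundant if some comparator can be removed
so that the outputs of the result are a permutation of the original outputs. -/
def Redundant {n : ℕ} (L1 L2 : Layer n) : Prop :=
  ∃ π : Equiv.Perm (Fin n),
    (∃ c ∈ L1, outputs [L1.erase c, L2] = permSet π (outputs [L1, L2])) ∨
    (∃ c ∈ L2, outputs [L1, L2.erase c] = permSet π (outputs [L1, L2]))

/-- A two-layer network `[L1, L2]` is saturated if it is non-redundant and no
comparator on two channels unused in the second layer can be added to the second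
layer so as to make the output set a proper subset of a permutation of the
original output set. -/
def Saturated {n : ℕ} (L1 L2 : Layer n) : Prop :=
  ¬ Redundant L1 L2 ∧
  ¬ ∃ (c : Comp n) (π : Equiv.Perm (Fin n)),
      c.1 < c.2 ∧ ¬ usedIn L2 c.1 ∧ ¬ usedIn L2 c.2 ∧
      outputs [L1, insert c L2] ⊂ permSet π (outputs [L1, L2])

/-- Vertices of the graph representation of `C`: the comparators of `C`,
tagged with the index of the layer containing them. -/
def Vertex {n : ℕ} (C : Net n) := {p : ℕ × Comp n // p.2 ∈ C.getD p.1 ∅}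

/-- The channel carrying the min output (`b = false`, label 1) or max output
(`b = true`, label 2) of a comparator. -/
def outChan {n : ℕ} (c : Comp n) (b : Bool) : Fin n := if b then c.2 else c.1

/-- An edge with label `b` (1 for min, 2 for max) from comparator `u` to
comparator `v`: the corresponding output of `u` is an input of `v`, i.e. `v`
is the next comparator on that channel. -/
def Edge {n : ℕ} (C : Net n) (b : Bool) (u v : ℕ × Comp n) : Prop :=
  u.1 < v.1 ∧ (outChan u.2 b = v.2.1 ∨ outChan u.2 b = v.2.2) ∧
  ∀ m, u.1 < m → m < v.1 → ¬ usedIn (C.getD m ∅) (outChan u.2 b)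

/-- The graph representations of `C` and `D` are isomorphic: a bijection of
comparators preserving the labeled edges. -/
def GraphIso {n m : ℕ} (C : Net n) (D : Net m) : Prop :=
  ∃ f : Vertex C ≃ Vertex D,
    ∀ (b : Bool) (u v : Vertex C),
      Edge C b u.val v.val ↔ Edge D b (f u).val (f v).val

/-- The graph representation of `C` is connected. -/
def GraphConnected {n : ℕ} (C : Net n) : Prop :=
  ∀ u v : Vertex C,
    Relation.ReflTransGen
      (fun a b : Vertex C => ∃ ℓ : Bool, Edge C ℓ a.val b.val ∨ Edge C ℓ b.val a.val) u v

/-- Reflection of a comparator: `(i,j) ↦ (n-j+1, n-i+1)` (in 1-based terms). -/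
def reflectComp {n : ℕ} (c : Comp n) : Comp n := (c.2.rev, c.1.rev)

def reflectLayer {n : ℕ} (L : Layer n) : Layer n := L.image reflectComp

/-- Reflection `C^R` of a comparator network. -/
def reflect {n : ℕ} (C : Net n) : Net n := C.map reflectLayer

/-- The first layer `F_n = {(2i-1, 2i) : 1 ≤ i ≤ ⌊n/2⌋}` (0-indexed: `(2i, 2i+1)`). -/
def FLayer (n : ℕ) : Layer n :=
  Finset.univ.filter fun c : Comp n => c.1.val % 2 = 0 ∧ c.2.val = c.1.val + 1

/-- The two-layer networks with first layer `F_n`, parametrized by second layer. -/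
def SecondLayers (n : ℕ) := {L : Layer n // IsLayer L}

/-- The number `|R(G_n)|` of equivalence classes of two-layer networks with
first layer `F_n`, under graph isomorphism `≈`. -/
noncomputable def numClasses (n : ℕ) : ℕ :=
  Nat.card (Quot fun L L' : SecondLayers n =>
    GraphIso ([FLayer n, L.val] : Net n) ([FLayer n, L'.val] : Net n))

/-- Redundant two-layer networks with first layer `F_n`. -/
def RedLayers (n : ℕ) := {L : Layer n // IsLayer L ∧ Redundant (FLayer n) L}

/-- The number of equivalence classes of redundant two-layer networks with
first layer `F_n`, under graph isomorphism `≈`. -/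
noncomputable def numRedClasses (n : ℕ) : ℕ :=
  Nat.card (Quot fun L L' : RedLayers n =>
    GraphIso ([FLayer n, L.val] : Net n) ([FLayer n, L'.val] : Net n))
set_option maxHeartbeats 1000000
-- Part 0: layer evaluation lemmas
section Dummy0
end Dummy0

section Basic
variable {n : ℕ}

lemma bool_le_iff {a b : Bool} : a ≤ b ↔ (a = true → b = true) := by
  cases a <;> cases b <;> simp

lemma applyLayer_fst {L : Layer n} (hno : NoOverlap L) (hne : ∀ c ∈ L, c.1 ≠ c.2)
    {c : Comp n} (hc : c ∈ L) (x : Fin n → Bool) :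
    applyLayer L x c.1 = (x c.1 && x c.2) := by
  have h1 : ∃ e ∈ L, e.1 = c.1 := ⟨c, hc, rfl⟩
  have hch := h1.choose_spec
  have hec : h1.choose = c := by
    by_contra hne'
    exact ((hno _ hch.1 _ hc hne').1) hch.2
  unfold applyLayer
  rw [dif_pos h1, hec]

lemma applyLayer_snd {L : Layer n} (hno : NoOverlap L) (hne : ∀ c ∈ L, c.1 ≠ c.2)
    {c : Comp n} (hc : c ∈ L) (x : Fin n → Bool) :
    applyLayer L x c.2 = (x c.1 || x c.2) := by
  have h1 : ¬ ∃ e ∈ L, e.1 = c.2 := by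
    rintro ⟨e, he, hee⟩
    by_cases hec : e = c
    · subst hec; exact hne _ he hee
    · exact (hno _ he _ hc hec).2.1 hee
  have h2 : ∃ e ∈ L, e.2 = c.2 := ⟨c, hc, rfl⟩
  have hch := h2.choose_spec
  have hec : h2.choose = c := by
    by_contra hne'
    exact ((hno _ hch.1 _ hc hne').2.2.2) hch.2
  unfold applyLayer
  rw [dif_neg h1, dif_pos h2, hec]

lemma applyLayer_unused {L : Layer n} {k : Fin n} (h : ¬ usedIn L k) (x : Fin n → Bool) :
    applyLayer L x k = x k := by
  have h1 : ¬ ∃ e ∈ L, e.1 = k := fun ⟨e, he, hh⟩ => h ⟨e, he, Or.inl hh⟩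
  have h2 : ¬ ∃ e ∈ L, e.2 = k := fun ⟨e, he, hh⟩ => h ⟨e, he, Or.inr hh⟩
  unfold applyLayer
  rw [dif_neg h1, dif_neg h2]

/-- If a vector is "sorted" at every comparator of a layer, the layer fixes it. -/
lemma applyLayer_fix {L : Layer n} (hno : NoOverlap L) (hne : ∀ c ∈ L, c.1 ≠ c.2)
    {x : Fin n → Bool} (hx : ∀ c ∈ L, x c.1 ≤ x c.2) :
    applyLayer L x = x := by
  funext k
  by_cases hk : usedIn L k
  · obtain ⟨c, hc, hck⟩ := hk
    rcases hck with h | h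
    · subst h
      rw [applyLayer_fst hno hne hc]
      have := hx c hc
      revert this; cases x c.1 <;> cases x c.2 <;> simp
    · subst h
      rw [applyLayer_snd hno hne hc]
      have := hx c hc
      revert this; cases x c.1 <;> cases x c.2 <;> simp
  · exact applyLayer_unused hk x

lemma range_applyLayer {L : Layer n} (hL : IsLayer L) :
    Set.range (applyLayer L) = {x | ∀ c ∈ L, x c.1 ≤ x c.2} := by
  have hne : ∀ c ∈ L, c.1 ≠ c.2 := fun c hc => ne_of_lt (hL.1 c hc)
  ext x
  constructor
  · rintro ⟨y, rfl⟩ c hc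
    rw [applyLayer_fst hL.2 hne hc, applyLayer_snd hL.2 hne hc]
    cases y c.1 <;> cases y c.2 <;> simp
  · intro hx
    exact ⟨x, applyLayer_fix hL.2 hne hx⟩

lemma run_two (L1 L2 : Layer n) (x : Fin n → Bool) :
    run [L1, L2] x = applyLayer L2 (applyLayer L1 x) := rfl

lemma outputs_two (L1 L2 : Layer n) :
    outputs [L1, L2] = applyLayer L2 '' Set.range (applyLayer L1) := by
  rw [outputs]
  rw [show (run ([L1, L2] : Net n)) = (applyLayer L2) ∘ (applyLayer L1) from rfl]
  exact Set.range_comp _ _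

end Basic
-- Part 1: FLayer facts
section FFacts
variable {n : ℕ}

lemma mem_FLayer {c : Comp n} : c ∈ FLayer n ↔ (c.1.val % 2 = 0 ∧ c.2.val = c.1.val + 1) := by
  simp [FLayer]

lemma FLayer_isLayer : IsLayer (FLayer n) := by
  constructor
  · intro c hc
    have h := mem_FLayer.1 hc
    exact Fin.lt_def.2 (by omega)
  · intro c hc c' hc' hne
    have h := mem_FLayer.1 hc
    have h' := mem_FLayer.1 hc'
    have hval : c.1.val ≠ c'.1.val := by
      intro heq
      apply hne
      have h2 : c.2.val = c'.2.val := by omega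
      exact Prod.ext (Fin.ext heq) (Fin.ext h2)
    refine ⟨fun hh => hval (congrArg Fin.val hh), ?_, ?_, ?_⟩ <;>
      (intro hh; have := congrArg Fin.val hh; omega)

lemma FLayer_ne {c : Comp n} (hc : c ∈ FLayer n) : c.1 ≠ c.2 :=
  ne_of_lt (FLayer_isLayer.1 c hc)

/-- the pair `(a, a+1)` is in `FLayer n` when `a` even, `a+1 < n`. -/
lemma pair_mem_FLayer {a b : Fin n} (ha : a.val % 2 = 0) (hb : b.val = a.val + 1) :
    (a, b) ∈ FLayer n := mem_FLayer.2 ⟨ha, hb⟩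

/-- two comparators of a NoOverlap layer sharing a channel are equal -/
lemma eq_of_shared {L : Layer n} (hno : NoOverlap L) {c c' : Comp n}
    (hc : c ∈ L) (hc' : c' ∈ L)
    (h : c.1 = c'.1 ∨ c.1 = c'.2 ∨ c.2 = c'.1 ∨ c.2 = c'.2) : c = c' := by
  by_contra hne
  obtain ⟨h1, h2, h3, h4⟩ := hno c hc c' hc' hne
  tauto

lemma erase_isLayer {L : Layer n} (hL : IsLayer L) (c : Comp n) : IsLayer (L.erase c) :=
  ⟨fun e he => hL.1 e (Finset.mem_of_mem_erase he),
   fun e he e' he' hne => hL.2 e (Finset.mem_of_mem_erase he) e' (Finset.mem_of_mem_erase he') hne⟩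

/-- channels of c are unused in L.erase c when L has no overlap -/
lemma unused_erase {L : Layer n} (hno : NoOverlap L) {c : Comp n} (hc : c ∈ L) {k : Fin n}
    (hk : k = c.1 ∨ k = c.2) : ¬ usedIn (L.erase c) k := by
  rintro ⟨e, he, hek⟩
  have heL := Finset.mem_of_mem_erase he
  have hene : e ≠ c := Finset.ne_of_mem_erase he
  obtain ⟨h1, h2, h3, h4⟩ := hno e heL c hc hene
  rcases hk with h' | h' <;> (subst h'; rcases hek with h | h <;> tauto)

end FFacts

-- Part 2: duplicate → redundant
section Dup

lemma permSet_one {n : ℕ} (S : Set (Fin n → Bool)) : permSet 1 S = S := by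
  have : permVec (n := n) 1 = id := by
    funext x i; rfl
  rw [permSet, this, Set.image_id]

lemma dup_redundant {n : ℕ} {L : Layer n} (hL : IsLayer L) {d : Comp n}
    (hdF : d ∈ FLayer n) (hdL : d ∈ L) : Redundant (FLayer n) L := by
  refine ⟨1, Or.inr ⟨d, hdL, ?_⟩⟩
  rw [permSet_one]
  have hFL := FLayer_isLayer (n := n)
  have hFne : ∀ c ∈ FLayer n, c.1 ≠ c.2 := fun c hc => FLayer_ne hc
  have hLne : ∀ c ∈ L, c.1 ≠ c.2 := fun c hc => ne_of_lt (hL.1 c hc)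
  have key : ∀ x, run [FLayer n, L.erase d] x = run [FLayer n, L] x := by
    intro x
    rw [run_two, run_two]
    set y := applyLayer (FLayer n) x with hy
    funext k
    by_cases hk : k = d.1 ∨ k = d.2
    · have hsort : y d.1 ≤ y d.2 := by
        rw [hy, applyLayer_fst hFL.2 hFne hdF, applyLayer_snd hFL.2 hFne hdF]
        cases x d.1 <;> cases x d.2 <;> simp
      have hunused := unused_erase hL.2 hdL hk
      rw [applyLayer_unused hunused]
      rcases hk with h | h
      · subst h
        rw [applyLayer_fst hL.2 hLne hdL]
        revert hsort; cases y d.1 <;> cases y d.2 <;> simp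
      · subst h
        rw [applyLayer_snd hL.2 hLne hdL]
        revert hsort; cases y d.1 <;> cases y d.2 <;> simp
    · push_neg at hk
      by_cases hu : usedIn (L.erase d) k
      · obtain ⟨e, he, hek⟩ := hu
        have heL := Finset.mem_of_mem_erase he
        rcases hek with h | h
        · subst h
          rw [applyLayer_fst (erase_isLayer hL d).2 (fun c hc => ne_of_lt ((erase_isLayer hL d).1 c hc)) he,
             applyLayer_fst hL.2 hLne heL]
        · subst h
          rw [applyLayer_snd (erase_isLayer hL d).2 (fun c hc => ne_of_lt ((erase_isLayer hL d).1 c hc)) he,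
             applyLayer_snd hL.2 hLne heL]
      · have hu2 : ¬ usedIn L k := by
          rintro ⟨e, he, hek⟩
          by_cases hed : e = d
          · subst hed; tauto
          · exact hu ⟨e, Finset.mem_erase.2 ⟨hed, he⟩, hek⟩
        rw [applyLayer_unused hu, applyLayer_unused hu2]
  rw [outputs, outputs]
  ext z
  constructor
  · rintro ⟨x, rfl⟩; exact ⟨x, (key x).symm⟩
  · rintro ⟨x, rfl⟩; exact ⟨x, key x⟩

end Dup
-- Part 3: generic counting lemmas and case (b)
section CaseB
variable {n : ℕ}

lemma permVec_injective (π : Equiv.Perm (Fin n)) : Function.Injective (permVec (n := n) π) := by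
  intro x y h
  funext i
  have := congrFun h (π i)
  simpa [permVec] using this

lemma ncard_permSet (π : Equiv.Perm (Fin n)) (S : Set (Fin n → Bool)) :
    (permSet π S).ncard = S.ncard :=
  Set.ncard_image_of_injective S (permVec_injective π)

lemma ncard_image_lt_of_collision {α β : Type*} {S : Set α} (hS : S.Finite) {f : α → β}
    {y y' : α} (hy : y ∈ S) (hy' : y' ∈ S) (hne : y ≠ y') (hf : f y = f y') :
    (f '' S).ncard < S.ncard := by
  have himg : f '' S = f '' (S \ {y}) := by
    apply Set.Subset.antisymm
    · rintro _ ⟨x, hx, rfl⟩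
      by_cases hxy : x = y
      · subst hxy
        exact ⟨y', ⟨hy', fun hm => hne (Set.mem_singleton_iff.1 hm).symm⟩, hf.symm⟩
      · exact ⟨x, ⟨hx, hxy⟩, rfl⟩
    · exact Set.image_mono Set.diff_subset
  rw [himg]
  calc (f '' (S \ {y})).ncard ≤ (S \ {y}).ncard := Set.ncard_image_le (hS.diff)
    _ < S.ncard := by
        rw [Set.ncard_diff_singleton_of_mem hy]
        have hpos : 0 < S.ncard := Set.ncard_pos hS |>.2 ⟨y, hy⟩
        omega

/-- decomposition: applying L = applying L.erase c then c -/
lemma applyLayer_erase_decomp {L : Layer n} (hL : IsLayer L) {c : Comp n} (hc : c ∈ L)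
    (x : Fin n → Bool) :
    applyLayer L x = applyLayer ({c} : Layer n) (applyLayer (L.erase c) x) := by
  have hLne : ∀ e ∈ L, e.1 ≠ e.2 := fun e he => ne_of_lt (hL.1 e he)
  have hsing : NoOverlap ({c} : Layer n) := by
    intro e he e' he' hne
    simp only [Finset.mem_singleton] at he he'
    exact absurd (he.trans he'.symm) hne
  have hsingne : ∀ e ∈ ({c} : Layer n), e.1 ≠ e.2 := by
    intro e he; simp only [Finset.mem_singleton] at he; subst he; exact hLne _ hc
  have hcs : c ∈ ({c} : Layer n) := Finset.mem_singleton_self c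
  have hEL := erase_isLayer hL c
  have hELne : ∀ e ∈ L.erase c, e.1 ≠ e.2 := fun e he => ne_of_lt (hEL.1 e he)
  funext k
  by_cases hk : k = c.1 ∨ k = c.2
  · have h1 := applyLayer_unused (unused_erase hL.2 hc (Or.inl rfl)) x
    have h2 := applyLayer_unused (unused_erase hL.2 hc (Or.inr rfl)) x
    rcases hk with h | h <;> subst h
    · rw [applyLayer_fst hL.2 hLne hc, applyLayer_fst hsing hsingne hcs, h1, h2]
    · rw [applyLayer_snd hL.2 hLne hc, applyLayer_snd hsing hsingne hcs, h1, h2]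
  · push_neg at hk
    have hcu : ¬ usedIn ({c} : Layer n) k := by
      rintro ⟨e, he, hek⟩
      simp only [Finset.mem_singleton] at he; subst he; tauto
    rw [applyLayer_unused hcu]
    by_cases hu : usedIn (L.erase c) k
    · obtain ⟨e, he, hek⟩ := hu
      have heL := Finset.mem_of_mem_erase he
      rcases hek with h | h <;> subst h
      · rw [applyLayer_fst hL.2 hLne heL, applyLayer_fst hEL.2 hELne he]
      · rw [applyLayer_snd hL.2 hLne heL, applyLayer_snd hEL.2 hELne he]
    · have hu2 : ¬ usedIn L k := by
        rintro ⟨e, he, hek⟩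
        by_cases hed : e = c
        · subst hed; tauto
        · exact hu ⟨e, Finset.mem_erase.2 ⟨hed, he⟩, hek⟩
      rw [applyLayer_unused hu, applyLayer_unused hu2]

/-- Case (b) of the redundancy characterization is impossible without duplicate. -/
lemma caseB_dup {L : Layer n} (hL : IsLayer L) (π : Equiv.Perm (Fin n)) {c : Comp n}
    (hc : c ∈ L)
    (heq : outputs [FLayer n, L.erase c] = permSet π (outputs [FLayer n, L])) :
    ∃ d ∈ FLayer n, d ∈ L := by
  by_contra hnodup
  push_neg at hnodup
  have hcF : c ∉ FLayer n := fun h => hnodup c h hc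
  have hclt : c.1 < c.2 := hL.1 c hc
  have hcne : c.1 ≠ c.2 := ne_of_lt hclt
  set A : Set (Fin n → Bool) := Set.range (applyLayer (FLayer n)) with hA
  set M := applyLayer (L.erase c) with hM
  set S := outputs [FLayer n, L] with hS
  set S' := outputs [FLayer n, L.erase c] with hS'
  have hS'A : S' = M '' A := outputs_two _ _
  have hSA : S = applyLayer {c} '' S' := by
    rw [hS, outputs_two, hS'A, ← Set.image_comp]
    have hfe : applyLayer L = (applyLayer ({c} : Layer n)) ∘ (applyLayer (L.erase c)) := by
      funext x
      exact applyLayer_erase_decomp hL hc x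
    rw [hfe]
  -- the two witnesses
  classical
  set w : Fin n → Bool := fun k =>
    decide (c.1.val % 2 = 0 ∧ k.val = c.1.val + 1) ||
    decide (c.2.val % 2 = 0 ∧ k.val = c.2.val + 1) with hw
  set z : Fin n → Bool := fun k => w k || decide (k = c.1) with hz
  set z' : Fin n → Bool := fun k => w k || decide (k = c.2) with hz'
  have hwodd : ∀ k : Fin n, k.val % 2 = 0 → w k = false := by
    intro k hk
    simp only [hw, Bool.or_eq_false_iff, decide_eq_false_iff_not]
    constructor <;> (rintro ⟨he, hke⟩; omega)
  have hzA : z ∈ A := by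
    rw [hA, range_applyLayer FLayer_isLayer]
    intro e he
    obtain ⟨he1, he2⟩ := mem_FLayer.1 he
    rw [bool_le_iff]
    intro h1
    simp only [hz, Bool.or_eq_true, decide_eq_true_eq] at h1 ⊢
    rcases h1 with h1 | h1
    · rw [hwodd e.1 he1] at h1; exact absurd h1 (by simp)
    · rw [h1] at he1 he2
      left
      simp only [hw, Bool.or_eq_true, decide_eq_true_eq]
      left; exact ⟨he1, he2⟩
  have hz'A : z' ∈ A := by
    rw [hA, range_applyLayer FLayer_isLayer]
    intro e he
    obtain ⟨he1, he2⟩ := mem_FLayer.1 he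
    rw [bool_le_iff]
    intro h1
    simp only [hz', Bool.or_eq_true, decide_eq_true_eq] at h1 ⊢
    rcases h1 with h1 | h1
    · rw [hwodd e.1 he1] at h1; exact absurd h1 (by simp)
    · rw [h1] at he1 he2
      left
      simp only [hw, Bool.or_eq_true, decide_eq_true_eq]
      right; exact ⟨he1, he2⟩
  set y := M z with hy
  set y' := M z' with hy'
  have hyS' : y ∈ S' := hS'A ▸ ⟨z, hzA, rfl⟩
  have hy'S' : y' ∈ S' := hS'A ▸ ⟨z', hz'A, rfl⟩
  have hu1 := unused_erase hL.2 hc (Or.inl rfl)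
  have hu2 := unused_erase hL.2 hc (Or.inr rfl)
  have hy1 : y c.1 = true := by
    rw [hy, hM, applyLayer_unused hu1]
    simp [hz]
  have hwc2 : w c.2 = false := by
    simp only [hw, Bool.or_eq_false_iff, decide_eq_false_iff_not]
    constructor
    · rintro ⟨he, hke⟩
      exact hcF (pair_mem_FLayer he (by omega))
    · rintro ⟨he, hke⟩; omega
  have hy2 : y c.2 = false := by
    rw [hy, hM, applyLayer_unused hu2]
    simp only [hz, Bool.or_eq_false_iff, hwc2, decide_eq_false_iff_not]
    exact ⟨trivial, fun h => hcne h.symm⟩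
  have hwc1 : w c.1 = false := by
    simp only [hw, Bool.or_eq_false_iff, decide_eq_false_iff_not]
    constructor
    · rintro ⟨he, hke⟩; omega
    · rintro ⟨he, hke⟩
      have := Fin.lt_def.1 hclt; omega
  have hy'1 : y' c.1 = false := by
    rw [hy', hM, applyLayer_unused hu1]
    simp only [hz', Bool.or_eq_false_iff, hwc1, decide_eq_false_iff_not]
    exact ⟨trivial, hcne⟩
  have hy'2 : y' c.2 = true := by
    rw [hy', hM, applyLayer_unused hu2]
    simp [hz']
  have hoff : ∀ k : Fin n, k ≠ c.1 → k ≠ c.2 → y k = y' k := by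
    intro k hk1 hk2
    have hzz : ∀ j : Fin n, j ≠ c.1 → j ≠ c.2 → z j = z' j := by
      intro j hj1 hj2
      simp only [hz, hz']
      rw [decide_eq_false hj1, decide_eq_false hj2]
    have hEL := erase_isLayer hL c
    have hELne : ∀ e ∈ L.erase c, e.1 ≠ e.2 := fun e he => ne_of_lt (hEL.1 e he)
    by_cases hu : usedIn (L.erase c) k
    · obtain ⟨e, he, hek⟩ := hu
      have heL := Finset.mem_of_mem_erase he
      have hene : e ≠ c := Finset.ne_of_mem_erase he
      obtain ⟨g1, g2, g3, g4⟩ := hL.2 e heL c hc hene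
      have hz1 := hzz e.1 g1 g2
      have hz2 := hzz e.2 g3 g4
      rcases hek with h | h <;> subst h
      · rw [hy, hy', hM, applyLayer_fst hEL.2 hELne he, applyLayer_fst hEL.2 hELne he, hz1, hz2]
      · rw [hy, hy', hM, applyLayer_snd hEL.2 hELne he, applyLayer_snd hEL.2 hELne he, hz1, hz2]
    · rw [hy, hy', hM, applyLayer_unused hu, applyLayer_unused hu, hzz k hk1 hk2]
  have hyne : y ≠ y' := fun h => by rw [h, hy'1] at hy1; exact absurd hy1 (by simp)
  have hcoll : applyLayer {c} y = applyLayer {c} y' := by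
    have hsing : NoOverlap ({c} : Layer n) := by
      intro e he e' he' hne
      simp only [Finset.mem_singleton] at he he'
      exact absurd (he.trans he'.symm) hne
    have hsingne : ∀ e ∈ ({c} : Layer n), e.1 ≠ e.2 := by
      intro e he; simp only [Finset.mem_singleton] at he; subst he; exact hcne
    have hcs : c ∈ ({c} : Layer n) := Finset.mem_singleton_self c
    funext k
    by_cases hk : k = c.1 ∨ k = c.2
    · rcases hk with h | h <;> subst h
      · rw [applyLayer_fst hsing hsingne hcs, applyLayer_fst hsing hsingne hcs,
          hy1, hy2, hy'1, hy'2]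
        simp
      · rw [applyLayer_snd hsing hsingne hcs, applyLayer_snd hsing hsingne hcs,
          hy1, hy2, hy'1, hy'2]
        simp
    · push_neg at hk
      have hcu : ¬ usedIn ({c} : Layer n) k := by
        rintro ⟨e, he, hek⟩
        simp only [Finset.mem_singleton] at he; subst he; tauto
      rw [applyLayer_unused hcu, applyLayer_unused hcu, hoff k hk.1 hk.2]
  have hlt : S.ncard < S'.ncard := by
    rw [hSA]
    exact ncard_image_lt_of_collision (Set.toFinite S') hyS' hy'S' hyne hcoll
  rw [heq, ncard_permSet] at hlt
  exact lt_irrefl _ hlt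

end CaseB
-- Part 4: case (a) helpers
section CaseA
variable {n : ℕ}

lemma ble {a b : Bool} (h : a = true → b = true) : a ≤ b := bool_le_iff.2 h

lemma forced_unused {L : Layer n} {z y : Fin n → Bool} (h : applyLayer L z = y)
    {k : Fin n} (hk : ¬ usedIn L k) : z k = y k := by
  rw [← h, applyLayer_unused hk]

lemma forced_eq {L : Layer n} (hL : IsLayer L) {z y : Fin n → Bool} (h : applyLayer L z = y)
    {e : Comp n} (he : e ∈ L) (hcst : y e.1 = y e.2) : z e.1 = y e.1 ∧ z e.2 = y e.2 := by
  have hLne : ∀ e ∈ L, e.1 ≠ e.2 := fun e he => ne_of_lt (hL.1 e he)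
  have h1 : (z e.1 && z e.2) = y e.1 := by rw [← h, applyLayer_fst hL.2 hLne he]
  have h2 : (z e.1 || z e.2) = y e.2 := by rw [← h, applyLayer_snd hL.2 hLne he]
  rw [← hcst] at h2
  rw [← hcst]
  revert h1 h2
  cases z e.1 <;> cases z e.2 <;> cases y e.1 <;> simp

lemma forced_branch {L : Layer n} (hL : IsLayer L) {z y : Fin n → Bool}
    (h : applyLayer L z = y) {e : Comp n} (he : e ∈ L)
    (h1 : y e.1 = false) (h2 : y e.2 = true) :
    (z e.1 = false ∧ z e.2 = true) ∨ (z e.1 = true ∧ z e.2 = false) := by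
  have hLne : ∀ e ∈ L, e.1 ≠ e.2 := fun e he => ne_of_lt (hL.1 e he)
  have g1 : (z e.1 && z e.2) = false := by rw [← h1, ← h, applyLayer_fst hL.2 hLne he]
  have g2 : (z e.1 || z e.2) = true := by rw [← h2, ← h, applyLayer_snd hL.2 hLne he]
  revert g1 g2
  cases z e.1 <;> cases z e.2 <;> simp

/-- if y is constant on every comparator of L, any preimage equals y -/
lemma forced_all {L : Layer n} (hL : IsLayer L) {z y : Fin n → Bool}
    (h : applyLayer L z = y) (hcst : ∀ e ∈ L, y e.1 = y e.2) : ∀ k, z k = y k := by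
  intro k
  by_cases hk : usedIn L k
  · obtain ⟨e, he, hek⟩ := hk
    rcases hek with hh | hh <;> rw [← hh]
    · exact (forced_eq hL h he (hcst e he)).1
    · exact (forced_eq hL h he (hcst e he)).2
  · exact forced_unused h hk

/-- channels of an F-comparator c are unused by other F-comparators -/
lemma F_channels_unique {c f : Comp n} (hc : c ∈ FLayer n) (hf : f ∈ (FLayer n).erase c) :
    f.1 ≠ c.1 ∧ f.2 ≠ c.1 ∧ f.1 ≠ c.2 ∧ f.2 ≠ c.2 := by
  have hfF := Finset.mem_of_mem_erase hf
  have hfc := Finset.ne_of_mem_erase hf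
  have := FLayer_isLayer.2 f hfF c hc hfc
  tauto

end CaseA
-- Part 4b: the walk recursion
section Walk
variable {n : ℕ}

lemma walk_false {L : Layer n} (hL : IsLayer L) {c : Comp n} (hcF : c ∈ FLayer n)
    (hnodup : ∀ d ∈ FLayer n, d ∉ L)
    (hkey : ∀ y : Fin n → Bool, (∀ e ∈ (FLayer n).erase c, y e.1 ≤ y e.2) →
      (∀ e ∈ L, y e.1 ≤ y e.2) →
      ∃ z, (∀ e ∈ FLayer n, z e.1 ≤ z e.2) ∧ applyLayer L z = y) :
    ∀ (fuel : ℕ) (W : Finset (Fin n)) (v : Fin n),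
      n + 1 - W.card ≤ fuel →
      v ∈ W → c.1 ∈ W → c.2 ∉ W →
      (∀ e ∈ L, (e.1 = v ∨ e.2 = v) → (e.1 ≠ v → e.1 ∉ W) ∧ (e.2 ≠ v → e.2 ∉ W)) →
      (∀ e ∈ L, e.1 ≠ v → e.2 ≠ v → (e.1 ∈ W ↔ e.2 ∈ W)) →
      (∀ e ∈ (FLayer n).erase c, (e.1 ∈ W ↔ e.2 ∈ W)) →
      ((∃ v', (v', v) ∈ (FLayer n).erase c ∧ v' ∈ W) ∨ (v = c.1 ∧ W = {c.1})) →
      (v = c.1 ∨ c.1 < v) → False := by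
  have hpq : c.2.val = c.1.val + 1 := (mem_FLayer.1 hcF).2
  have hclt : c.1 < c.2 := FLayer_isLayer.1 c hcF
  intro fuel
  induction fuel with
  | zero =>
    intro W v hfuel _ _ _ _ _ _ _ _
    have hcard : W.card ≤ n := by
      simpa using Finset.card_le_univ W
    omega
  | succ fuel ih =>
    intro W v hfuel hvW hpW hqW hI2a hI2b hI3 hI5 hI6
    -- generic contradiction from a fully F-sorted preimage with the (c.1,c.2) pattern
    have hfin : ∀ z : Fin n → Bool, (∀ e ∈ FLayer n, z e.1 ≤ z e.2) →
        z c.1 = true → z c.2 = false → False := by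
      intro z hz h1 h2
      have := hz c hcF
      rw [h1, h2] at this
      exact absurd this (by decide)
    have hiff : ∀ (X : Finset (Fin n)) (a b : Fin n), (a ∈ X ↔ b ∈ X) →
        (decide (a ∈ X) : Bool) = decide (b ∈ X) := by
      intro X a b h
      by_cases ha : a ∈ X
      · rw [decide_eq_true ha, decide_eq_true (h.1 ha)]
      · rw [decide_eq_false ha, decide_eq_false (fun hb => ha (h.2 hb))]
    by_cases hvL : ∃ e ∈ L, e.1 = v ∨ e.2 = v
    · obtain ⟨eL, heL, hor⟩ := hvL
      have heLlt : eL.1 < eL.2 := hL.1 eL heL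
      have heLne : eL.1 ≠ eL.2 := ne_of_lt heLlt
      have heLuniq : ∀ e ∈ L, (e.1 = v ∨ e.2 = v) → e = eL := by
        intro e he hev
        refine eq_of_shared hL.2 he heL ?_
        rcases hev with h | h <;> rcases hor with h' | h'
        · exact Or.inl (h.trans h'.symm)
        · exact Or.inr (Or.inl (h.trans h'.symm))
        · exact Or.inr (Or.inr (Or.inl (h.trans h'.symm)))
        · exact Or.inr (Or.inr (Or.inr (h.trans h'.symm)))
      have heLt : ∀ e ∈ L, (e.1 = eL.1 ∨ e.1 = eL.2 ∨ e.2 = eL.1 ∨ e.2 = eL.2) → e = eL :=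
        fun e he h => eq_of_shared hL.2 he heL h
      -- generic "insert t W" witness
      have witIns : ∀ t : Fin n, t ∉ W → t ≠ c.2 →
          (eL.1 = t ∨ eL.1 ∈ W) → (eL.2 = t ∨ eL.2 ∈ W) →
          (t = eL.1 ∨ t = eL.2) →
          (∀ e ∈ (FLayer n).erase c,
            (decide (e.1 ∈ insert t W) : Bool) ≤ decide (e.2 ∈ insert t W)) →
          False := by
        intro t htW htq hoth1 hoth2 hteL hα
        have hconst : ∀ e ∈ L, (decide (e.1 ∈ insert t W) : Bool) = decide (e.2 ∈ insert t W) := by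
          intro e he
          by_cases he' : e = eL
          · subst he'
            have h1 : e.1 ∈ insert t W := by
              rcases hoth1 with h | h
              · rw [h]; exact Finset.mem_insert_self t W
              · exact Finset.mem_insert_of_mem h
            have h2 : e.2 ∈ insert t W := by
              rcases hoth2 with h | h
              · rw [h]; exact Finset.mem_insert_self t W
              · exact Finset.mem_insert_of_mem h
            rw [decide_eq_true h1, decide_eq_true h2]
          · have hv1 : e.1 ≠ v := fun h => he' (heLuniq e he (Or.inl h))
            have hv2 : e.2 ≠ v := fun h => he' (heLuniq e he (Or.inr h))
            have ht1 : e.1 ≠ t := by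
              intro h
              apply he'
              apply heLt e he
              rcases hteL with h' | h'
              · exact Or.inl (h.trans h')
              · exact Or.inr (Or.inl (h.trans h'))
            have ht2 : e.2 ≠ t := by
              intro h
              apply he'
              apply heLt e he
              rcases hteL with h' | h'
              · exact Or.inr (Or.inr (Or.inl (h.trans h')))
              · exact Or.inr (Or.inr (Or.inr (h.trans h')))
            apply hiff
            rw [Finset.mem_insert, Finset.mem_insert]
            constructor
            · rintro (h | h)
              · exact absurd h ht1
              · exact Or.inr ((hI2b e he hv1 hv2).1 h)
            · rintro (h | h)
              · exact absurd h ht2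
              · exact Or.inr ((hI2b e he hv1 hv2).2 h)
        obtain ⟨z, hzs, hzap⟩ := hkey (fun k => decide (k ∈ insert t W)) hα
          (fun e he => le_of_eq (hconst e he))
        have hzy := forced_all hL hzap hconst
        apply hfin z hzs
        · rw [hzy c.1]
          simp only [decide_eq_true_eq]
          exact Finset.mem_insert_of_mem hpW
        · rw [hzy c.2]
          simp only [decide_eq_false_iff_not, Finset.mem_insert]
          rintro (h | h)
          · exact htq h.symm
          · exact hqW h
      -- generic α proofs
      have hαdead : ∀ t : Fin n, (∀ f ∈ (FLayer n).erase c, f.1 ≠ t ∧ f.2 ≠ t) →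
          ∀ e ∈ (FLayer n).erase c,
            (decide (e.1 ∈ insert t W) : Bool) ≤ decide (e.2 ∈ insert t W) := by
        intro t ht e he
        apply le_of_eq
        apply hiff
        rw [Finset.mem_insert, Finset.mem_insert]
        have h1 := (ht e he).1
        have h2 := (ht e he).2
        constructor
        · rintro (h | h)
          · exact absurd h h1
          · exact Or.inr ((hI3 e he).1 h)
        · rintro (h | h)
          · exact absurd h h2
          · exact Or.inr ((hI3 e he).2 h)
      have hαmax : ∀ t : Fin n, t ∉ W → ∀ f, f ∈ (FLayer n).erase c → f.2 = t →
          ∀ e ∈ (FLayer n).erase c,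
            (decide (e.1 ∈ insert t W) : Bool) ≤ decide (e.2 ∈ insert t W) := by
        intro t htW f hf hf2 e he
        by_cases hef : e = f
        · subst hef
          have hne : e.1 ≠ e.2 := ne_of_lt (FLayer_isLayer.1 e (Finset.mem_of_mem_erase he))
          have h1 : e.1 ∉ insert t W := by
            rw [Finset.mem_insert]
            rintro (h | h)
            · exact hne (h.trans hf2.symm)
            · exact ((hI3 e he).1 h |> fun hh => htW (hf2 ▸ hh))
          rw [decide_eq_false h1]
          exact Bool.false_le _
        · have h1 : e.1 ≠ t := fun h => hef (eq_of_shared FLayer_isLayer.2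
            (Finset.mem_of_mem_erase he) (Finset.mem_of_mem_erase hf) (Or.inr (Or.inl (h.trans hf2.symm))))
          have h2 : e.2 ≠ t := fun h => hef (eq_of_shared FLayer_isLayer.2
            (Finset.mem_of_mem_erase he) (Finset.mem_of_mem_erase hf) (Or.inr (Or.inr (Or.inr (h.trans hf2.symm)))))
          apply le_of_eq
          apply hiff
          rw [Finset.mem_insert, Finset.mem_insert]
          constructor
          · rintro (h | h)
            · exact absurd h h1
            · exact Or.inr ((hI3 e he).1 h)
          · rintro (h | h)
            · exact absurd h h2
            · exact Or.inr ((hI3 e he).2 h)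
      rcases hor with horA | horB
      · -- BAD orientation : eL = (v, t)
        have htne : eL.2 ≠ v := fun h => heLne (horA.trans h.symm)
        have htW : eL.2 ∉ W := (hI2a eL heL (Or.inl horA)).2 htne
        have hvt : v < eL.2 := horA ▸ heLlt
        by_cases htq : eL.2 = c.2
        · rcases hI6 with hvp | hvp
          · apply hnodup c hcF
            have : eL = c := Prod.ext (horA.trans hvp) htq
            rwa [← this]
          · have h1 := Fin.lt_def.1 hvp
            have h2 := Fin.lt_def.1 hvt
            rw [Fin.ext_iff] at htq
            omega
        · -- F-step at t := eL.2
          by_cases htF : ∃ f ∈ (FLayer n).erase c, f.1 = eL.2 ∨ f.2 = eL.2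
          · obtain ⟨f, hf, hfor⟩ := htF
            have hflt : f.1 < f.2 := FLayer_isLayer.1 f (Finset.mem_of_mem_erase hf)
            rcases hfor with hf1 | hf2
            · -- min-entered: RECURSE
              set t := eL.2 with htdef
              set u := f.2 with hudef
              have hfu : f = (t, u) := Prod.ext hf1 rfl
              have hut : u ≠ t := (ne_of_lt (hf1 ▸ hflt)).symm
              have huW : u ∉ W := fun h => htW (hf1 ▸ (hI3 f hf).2 h)
              obtain ⟨hup1, hup2, huq1, huq2⟩ := F_channels_unique hcF hf
              -- hup1 : f.1 ≠ c.1 etc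
              have htp : t ≠ c.1 := hf1 ▸ hup1
              have hup : u ≠ c.1 := hup2
              have huq : u ≠ c.2 := huq2
              have hcard : (insert u (insert t W)).card = W.card + 2 := by
                rw [Finset.card_insert_of_notMem, Finset.card_insert_of_notMem htW]
                rw [Finset.mem_insert]
                rintro (h | h)
                · exact hut h
                · exact huW h
              have hcardle : (insert u (insert t W)).card ≤ n := by
                simpa using Finset.card_le_univ (insert u (insert t W))
              apply ih (insert u (insert t W)) u (by omega)
              · exact Finset.mem_insert_self u _
              · exact Finset.mem_insert_of_mem (Finset.mem_insert_of_mem hpW)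
              · rw [Finset.mem_insert, Finset.mem_insert]
                rintro (h | h | h)
                · exact huq h.symm
                · exact htq h.symm
                · exact hqW h
              · -- hI2a'
                intro e he hev
                have heeL : e ≠ eL := by
                  intro h
                  subst h
                  rcases hev with h | h
                  · rw [horA] at h; exact huW (h ▸ hvW)
                  · exact hut h.symm
                have hv1 : e.1 ≠ v := fun h => heeL (heLuniq e he (Or.inl h))
                have hv2 : e.2 ≠ v := fun h => heeL (heLuniq e he (Or.inr h))
                have ht1 : e.1 ≠ t := fun h => heeL (heLt e he (Or.inr (Or.inl h)))
                have ht2 : e.2 ≠ t := fun h => heeL (heLt e he (Or.inr (Or.inr (Or.inr h))))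
                constructor
                · intro hne1
                  have he2u : e.2 = u := by
                    rcases hev with h | h
                    · exact absurd h hne1
                    · exact h
                  have he1W : e.1 ∉ W := by
                    intro h
                    have := (hI2b e he hv1 hv2).1 h
                    rw [he2u] at this
                    exact huW this
                  rw [Finset.mem_insert, Finset.mem_insert]
                  rintro (h | h | h)
                  · rcases hev with h' | h'
                    · exact hne1 h'
                    · exact hne1 (h.trans (h' ▸ rfl))
                  · exact ht1 h
                  · exact he1W h
                · intro hne2
                  have he1u : e.1 = u := by
                    rcases hev with h | h
                    · exact h
                    · exact absurd h hne2
                  have he2W : e.2 ∉ W := by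
                    intro h
                    have := (hI2b e he hv1 hv2).2 h
                    rw [he1u] at this
                    exact huW this
                  rw [Finset.mem_insert, Finset.mem_insert]
                  rintro (h | h | h)
                  · exact hne2 h
                  · exact ht2 h
                  · exact he2W h
              · -- hI2b'
                intro e he hne1 hne2
                by_cases he' : e = eL
                · subst he'
                  constructor <;> intro _
                  · rw [Finset.mem_insert, Finset.mem_insert]
                    exact Or.inr (Or.inl rfl)
                  · rw [Finset.mem_insert, Finset.mem_insert]
                    rw [horA]
                    exact Or.inr (Or.inr hvW)
                · have hv1 : e.1 ≠ v := fun h => he' (heLuniq e he (Or.inl h))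
                  have hv2 : e.2 ≠ v := fun h => he' (heLuniq e he (Or.inr h))
                  have ht1 : e.1 ≠ t := fun h => he' (heLt e he (Or.inr (Or.inl h)))
                  have ht2 : e.2 ≠ t := fun h => he' (heLt e he (Or.inr (Or.inr (Or.inr h))))
                  rw [Finset.mem_insert, Finset.mem_insert, Finset.mem_insert, Finset.mem_insert]
                  constructor
                  · rintro (h | h | h)
                    · exact absurd h hne1
                    · exact absurd h ht1
                    · exact Or.inr (Or.inr ((hI2b e he hv1 hv2).1 h))
                  · rintro (h | h | h)
                    · exact absurd h hne2
                    · exact absurd h ht2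
                    · exact Or.inr (Or.inr ((hI2b e he hv1 hv2).2 h))
              · -- hI3'
                intro e he
                by_cases hef : e = f
                · subst hef
                  constructor <;> intro _
                  · exact Finset.mem_insert_self _ _
                  · rw [Finset.mem_insert, Finset.mem_insert, hf1]
                    exact Or.inr (Or.inl rfl)
                · have h1 : e.1 ≠ t := fun h => hef (eq_of_shared FLayer_isLayer.2
                    (Finset.mem_of_mem_erase he) (Finset.mem_of_mem_erase hf) (Or.inl (h.trans hf1.symm)))
                  have h2 : e.2 ≠ t := fun h => hef (eq_of_shared FLayer_isLayer.2
                    (Finset.mem_of_mem_erase he) (Finset.mem_of_mem_erase hf) (Or.inr (Or.inr (Or.inl (h.trans hf1.symm)))))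
                  have h3 : e.1 ≠ u := fun h => hef (eq_of_shared FLayer_isLayer.2
                    (Finset.mem_of_mem_erase he) (Finset.mem_of_mem_erase hf) (Or.inr (Or.inl h)))
                  have h4 : e.2 ≠ u := fun h => hef (eq_of_shared FLayer_isLayer.2
                    (Finset.mem_of_mem_erase he) (Finset.mem_of_mem_erase hf) (Or.inr (Or.inr (Or.inr h))))
                  rw [Finset.mem_insert, Finset.mem_insert, Finset.mem_insert, Finset.mem_insert]
                  constructor
                  · rintro (h | h | h)
                    · exact absurd h h3
                    · exact absurd h h1
                    · exact Or.inr (Or.inr ((hI3 e he).1 h))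
                  · rintro (h | h | h)
                    · exact absurd h h4
                    · exact absurd h h2
                    · exact Or.inr (Or.inr ((hI3 e he).2 h))
              · -- hI5'
                left
                refine ⟨t, ?_, Finset.mem_insert_of_mem (Finset.mem_insert_self t W)⟩
                rwa [← hfu]
              · -- hI6'
                right
                have h1 : c.1 ≤ v := by
                  rcases hI6 with h | h
                  · exact le_of_eq h.symm
                  · exact le_of_lt h
                have h2 : t < u := hf1 ▸ hflt
                exact lt_of_le_of_lt h1 (lt_trans hvt h2)
            · -- max-entered: WITNESS1
              exact witIns eL.2 htW htq (Or.inr (horA ▸ hvW)) (Or.inl rfl) (Or.inr rfl)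
                (hαmax eL.2 htW f hf hf2)
          · -- dead end: WITNESS-dead
            push_neg at htF
            exact witIns eL.2 htW htq (Or.inr (horA ▸ hvW)) (Or.inl rfl) (Or.inr rfl)
              (hαdead eL.2 htF)
      · -- GOOD orientation : eL = (t, v)
        have htne : eL.1 ≠ v := fun h => heLne (h.trans horB.symm)
        have htW : eL.1 ∉ W := (hI2a eL heL (Or.inr horB)).1 htne
        have hvWe : eL.2 ∈ W := by rw [horB]; exact hvW
        -- generic witness y = 1_W machinery
        have hβ : ∀ e ∈ L, (decide (e.1 ∈ W) : Bool) ≤ decide (e.2 ∈ W) := by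
          intro e he
          by_cases he' : e = eL
          · subst he'
            rw [decide_eq_false htW]
            exact Bool.false_le _
          · have hv1 : e.1 ≠ v := fun h => he' (heLuniq e he (Or.inl h))
            have hv2 : e.2 ≠ v := fun h => he' (heLuniq e he (Or.inr h))
            exact le_of_eq (hiff W _ _ (hI2b e he hv1 hv2))
        have hα : ∀ e ∈ (FLayer n).erase c, (decide (e.1 ∈ W) : Bool) ≤ decide (e.2 ∈ W) :=
          fun e he => le_of_eq (hiff W _ _ (hI3 e he))
        obtain ⟨z, hzs, hzap⟩ := hkey (fun k => decide (k ∈ W)) hα hβ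
        have hforce : ∀ k, k ≠ eL.1 → k ≠ eL.2 → z k = decide (k ∈ W) := by
          intro k h1 h2
          by_cases hk : usedIn L k
          · obtain ⟨e, he, hek⟩ := hk
            have he' : e ≠ eL := by
              intro h
              subst h
              rcases hek with h | h
              · exact h1 h.symm
              · exact h2 h.symm
            have hv1 : e.1 ≠ v := fun h => he' (heLuniq e he (Or.inl h))
            have hv2 : e.2 ≠ v := fun h => he' (heLuniq e he (Or.inr h))
            have hcst : (decide (e.1 ∈ W) : Bool) = decide (e.2 ∈ W) :=
              hiff W _ _ (hI2b e he hv1 hv2)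
            rcases hek with h | h <;> rw [← h]
            · exact (forced_eq hL hzap he hcst).1
            · exact (forced_eq hL hzap he hcst).2
          · exact forced_unused hzap hk
        have hbr := forced_branch hL hzap heL (decide_eq_false htW) (decide_eq_true hvWe)
        rcases hbr with ⟨hb1, hb2⟩ | ⟨hb1, hb2⟩
        · -- z agrees with 1_W pattern: contradiction at c
          apply hfin z hzs
          · by_cases h : c.1 = eL.2
            · rw [h]; exact hb2
            · have h' : c.1 ≠ eL.1 := fun hh => htW (hh ▸ hpW)
              rw [hforce c.1 h' h]
              exact decide_eq_true hpW
          · by_cases h : c.2 = eL.1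
            · rw [h]; exact hb1
            · have h' : c.2 ≠ eL.2 := fun hh => hqW (hh ▸ hvWe)
              rw [hforce c.2 h h']
              exact decide_eq_false hqW
        · -- inverted branch: kill it
          rcases hI5 with ⟨v', hv'F, hv'W⟩ | ⟨hvp, hWp⟩
          · have hv'1 : v' ≠ eL.1 := fun h => htW (h ▸ hv'W)
            have hv'2 : v' ≠ eL.2 := by
              intro h
              have hlt : (v', v).1 < (v', v).2 :=
                FLayer_isLayer.1 _ (Finset.mem_of_mem_erase hv'F)
              exact (ne_of_lt hlt) (h.trans horB)
            have hzv' : z v' = true := by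
              rw [hforce v' hv'1 hv'2]
              exact decide_eq_true hv'W
            have hle := hzs (v', v) (Finset.mem_of_mem_erase hv'F)
            have hzv : z v = false := by rw [← horB]; exact hb2
            rw [hzv', hzv] at hle
            exact absurd hle (by decide)
          · -- deferred start : v = c.1, W = {c.1}
            have htlt2 : eL.1 < c.1 := by
              have := heLlt
              rw [horB, hvp] at this
              exact this
            have htcq : eL.1 ≠ c.2 := by
              have h1 := Fin.lt_def.1 htlt2
              intro h
              rw [Fin.ext_iff] at h
              omega
            by_cases htF : ∃ f ∈ (FLayer n).erase c, f.1 = eL.1 ∨ f.2 = eL.1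
            · obtain ⟨f, hf, hfor⟩ := htF
              have hflt : f.1 < f.2 := FLayer_isLayer.1 f (Finset.mem_of_mem_erase hf)
              rcases hfor with hf1 | hf2
              · -- min-entered: kill the branch via the pair f = (t,u)
                obtain ⟨hup1, hup2, huq1, huq2⟩ := F_channels_unique hcF hf
                have hzu : z f.2 = false := by
                  have h1 : f.2 ≠ eL.1 := (ne_of_lt (hf1 ▸ hflt)).symm
                  have h2 : f.2 ≠ eL.2 := by
                    rw [horB, hvp]
                    exact hup2
                  rw [hforce f.2 h1 h2]
                  rw [hWp]
                  simp only [decide_eq_false_iff_not, Finset.mem_singleton]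
                  exact hup2
                have hle := hzs f (Finset.mem_of_mem_erase hf)
                rw [hf1, hb1, hzu] at hle
                exact absurd hle (by decide)
              · -- max-entered
                exact witIns eL.1 htW htcq (Or.inl rfl) (Or.inr hvWe) (Or.inl rfl)
                  (hαmax eL.1 htW f hf hf2)
            · push_neg at htF
              exact witIns eL.1 htW htcq (Or.inl rfl) (Or.inr hvWe) (Or.inl rfl)
                (hαdead eL.1 htF)
    · -- no L-comparator at v: witness 1_W
      push_neg at hvL
      have hconst : ∀ e ∈ L, (decide (e.1 ∈ W) : Bool) = decide (e.2 ∈ W) := by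
        intro e he
        have hv1 : e.1 ≠ v := (hvL e he).1
        have hv2 : e.2 ≠ v := (hvL e he).2
        exact hiff W _ _ (hI2b e he hv1 hv2)
      have hα : ∀ e ∈ (FLayer n).erase c, (decide (e.1 ∈ W) : Bool) ≤ decide (e.2 ∈ W) :=
        fun e he => le_of_eq (hiff W _ _ (hI3 e he))
      obtain ⟨z, hzs, hzap⟩ := hkey (fun k => decide (k ∈ W)) hα
        (fun e he => le_of_eq (hconst e he))
      have hzy := forced_all hL hzap hconst
      apply hfin z hzs
      · rw [hzy c.1]; exact decide_eq_true hpW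
      · rw [hzy c.2]; exact decide_eq_false hqW

end Walk
-- Part 5: the characterization of redundancy
section CharRed
variable {n : ℕ}

lemma caseA_dup {L : Layer n} (hL : IsLayer L) (π : Equiv.Perm (Fin n)) {c : Comp n}
    (hcF : c ∈ FLayer n)
    (heq : outputs [(FLayer n).erase c, L] = permSet π (outputs [FLayer n, L])) :
    ∃ d ∈ FLayer n, d ∈ L := by
  by_contra hnodup
  push_neg at hnodup
  have hF'L : IsLayer ((FLayer n).erase c) := erase_isLayer FLayer_isLayer c
  rw [outputs_two, outputs_two] at heq
  set S := applyLayer L '' Set.range (applyLayer (FLayer n)) with hS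
  set S' := applyLayer L '' Set.range (applyLayer ((FLayer n).erase c)) with hS'
  have hsub : S ⊆ S' := by
    apply Set.image_mono
    rw [range_applyLayer FLayer_isLayer, range_applyLayer hF'L]
    intro x hx e he
    exact hx e (Finset.mem_of_mem_erase he)
  have hncard : S'.ncard = S.ncard := by rw [heq, ncard_permSet]
  have hSeq : S = S' := Set.eq_of_subset_of_ncard_le hsub (le_of_eq hncard) (Set.toFinite S')
  have hkey : ∀ y : Fin n → Bool, (∀ e ∈ (FLayer n).erase c, y e.1 ≤ y e.2) →
      (∀ e ∈ L, y e.1 ≤ y e.2) →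
      ∃ z, (∀ e ∈ FLayer n, z e.1 ≤ z e.2) ∧ applyLayer L z = y := by
    intro y hα hβ
    have hy : y ∈ S' := by
      refine ⟨y, ?_, applyLayer_fix hL.2 (fun e he => ne_of_lt (hL.1 e he)) hβ⟩
      rw [range_applyLayer hF'L]
      exact hα
    rw [← hSeq] at hy
    obtain ⟨z, hz, hzy⟩ := hy
    rw [range_applyLayer FLayer_isLayer] at hz
    exact ⟨z, hz, hzy⟩
  have hne : c.2 ≠ c.1 := (ne_of_lt (FLayer_isLayer.1 c hcF)).symm
  apply walk_false hL hcF hnodup hkey (n + 1) {c.1} c.1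
  · have : ({c.1} : Finset (Fin n)).card = 1 := Finset.card_singleton c.1
    omega
  · exact Finset.mem_singleton_self c.1
  · exact Finset.mem_singleton_self c.1
  · rw [Finset.mem_singleton]; exact hne
  · intro e _ _
    constructor <;> (intro h hm; exact h (Finset.mem_singleton.1 hm))
  · intro e _ h1 h2
    rw [Finset.mem_singleton, Finset.mem_singleton]
    constructor
    · intro h; exact absurd h h1
    · intro h; exact absurd h h2
  · intro e he
    obtain ⟨g1, g2, g3, g4⟩ := F_channels_unique hcF he
    rw [Finset.mem_singleton, Finset.mem_singleton]
    constructor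
    · intro h; exact absurd h g1
    · intro h; exact absurd h g2
  · exact Or.inr ⟨rfl, rfl⟩
  · exact Or.inl rfl

/-- LEMMA A: a two-layer net with first layer F is redundant iff the second layer
repeats a comparator of F. -/
lemma redundant_iff_dup {L : Layer n} (hL : IsLayer L) :
    Redundant (FLayer n) L ↔ ∃ d ∈ FLayer n, d ∈ L := by
  constructor
  · rintro ⟨π, hcase | hcase⟩
    · obtain ⟨c, hc, heq⟩ := hcase
      exact caseA_dup hL π hc heq
    · obtain ⟨c, hc, heq⟩ := hcase
      exact caseB_dup hL π hc heq
  · rintro ⟨d, h1, h2⟩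
    exact dup_redundant hL h1 h2

end CharRed
-- Part 6: graph model
section Graph
variable {n m : ℕ}

def Match {n : ℕ} (b : Bool) (c d : Comp n) : Prop := outChan c b = d.1 ∨ outChan c b = d.2

lemma getD_two_zero (A B : Layer n) : ([A, B] : Net n).getD 0 ∅ = A := rfl
lemma getD_two_one (A B : Layer n) : ([A, B] : Net n).getD 1 ∅ = B := rfl

lemma vertex_cases {A B : Layer n} (w : Vertex ([A, B] : Net n)) :
    (w.val.1 = 0 ∧ w.val.2 ∈ A) ∨ (w.val.1 = 1 ∧ w.val.2 ∈ B) := by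
  have hp := w.property
  match h : w.val.1 with
  | 0 => rw [h] at hp; exact Or.inl ⟨rfl, hp⟩
  | 1 => rw [h] at hp; exact Or.inr ⟨rfl, hp⟩
  | (k+2) =>
    rw [h] at hp
    have : ([A, B] : Net n).getD (k+2) ∅ = ∅ := by
      simp [List.getD]
    rw [this] at hp
    exact absurd hp (Finset.notMem_empty _)

noncomputable def vE (A B : Layer n) :
    Vertex ([A, B] : Net n) ≃ ({c // c ∈ A} ⊕ {c // c ∈ B}) where
  toFun w :=
    if h : w.val.1 = 0 then
      Sum.inl ⟨w.val.2, by
        rcases vertex_cases w with ⟨_, hm⟩ | ⟨h1, _⟩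
        · exact hm
        · rw [h] at h1; exact absurd h1 (by omega)⟩
    else
      Sum.inr ⟨w.val.2, by
        rcases vertex_cases w with ⟨h0, _⟩ | ⟨_, hm⟩
        · exact absurd h0 h
        · exact hm⟩
  invFun s :=
    match s with
    | Sum.inl c => ⟨(0, c.val), c.property⟩
    | Sum.inr c => ⟨(1, c.val), c.property⟩
  left_inv := by
    intro w
    by_cases h : w.val.1 = 0
    · simp only [dif_pos h]
      apply Subtype.ext
      exact Prod.ext h.symm rfl
    · simp only [dif_neg h]
      rcases vertex_cases w with ⟨h0, _⟩ | ⟨h1, _⟩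
      · exact absurd h0 h
      · apply Subtype.ext
        exact Prod.ext h1.symm rfl
  right_inv := by
    rintro (c | c)
    · rfl
    · have h : ((1 : ℕ), c.val).1 ≠ 0 := by omega
      simp only [dif_neg h]

lemma edge_iff {A B : Layer n} (b : Bool) (u v : Vertex ([A, B] : Net n)) :
    Edge [A, B] b u.val v.val ↔
      (u.val.1 = 0 ∧ v.val.1 = 1 ∧ Match b u.val.2 v.val.2) := by
  constructor
  · rintro ⟨hlt, hm, _⟩
    have hu := vertex_cases u
    have hv := vertex_cases v
    have h1 : u.val.1 = 0 := by
      rcases hu with ⟨h, _⟩ | ⟨h, _⟩ <;> rcases hv with ⟨h', _⟩ | ⟨h', _⟩ <;> omega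
    have h2 : v.val.1 = 1 := by
      rcases hu with ⟨h, _⟩ | ⟨h, _⟩ <;> rcases hv with ⟨h', _⟩ | ⟨h', _⟩ <;> omega
    exact ⟨h1, h2, hm⟩
  · rintro ⟨h0, h1, hm⟩
    refine ⟨by omega, hm, ?_⟩
    intro k hk1 hk2
    rw [h0] at hk1
    rw [h1] at hk2
    omega

def MRel (A B : Layer n) (b : Bool) :
    ({c // c ∈ A} ⊕ {c // c ∈ B}) → ({c // c ∈ A} ⊕ {c // c ∈ B}) → Prop :=
  fun x y =>
    match x, y with
    | Sum.inl cx, Sum.inr dy => Match b cx.val dy.val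
    | _, _ => False

lemma edge_model {A B : Layer n} (b : Bool) (u v : Vertex ([A, B] : Net n)) :
    Edge [A, B] b u.val v.val ↔ MRel A B b (vE A B u) (vE A B v) := by
  rw [edge_iff]
  by_cases hu : u.val.1 = 0 <;> by_cases hv : v.val.1 = 0
  · simp only [vE, Equiv.coe_fn_mk, dif_pos hu, dif_pos hv, MRel]
    constructor
    · rintro ⟨_, h1, _⟩; omega
    · intro h; exact absurd h id
  · simp only [vE, Equiv.coe_fn_mk, dif_pos hu, dif_neg hv, MRel]
    have hv1 : v.val.1 = 1 := by
      rcases vertex_cases v with ⟨h, _⟩ | ⟨h, _⟩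
      · exact absurd h hv
      · exact h
    constructor
    · rintro ⟨_, _, h⟩; exact h
    · intro h; exact ⟨hu, hv1, h⟩
  · simp only [vE, Equiv.coe_fn_mk, dif_neg hu, dif_pos hv, MRel]
    constructor
    · rintro ⟨h, _, _⟩; exact absurd h hu
    · intro h; exact absurd h id
  · simp only [vE, Equiv.coe_fn_mk, dif_neg hu, dif_neg hv, MRel]
    constructor
    · rintro ⟨h, _, _⟩; exact absurd h hu
    · intro h; exact absurd h id

/-- model-level isomorphism of two-layer networks -/
def MIso (A B : Layer n) (A' B' : Layer m) : Prop :=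
  ∃ g : ({c // c ∈ A} ⊕ {c // c ∈ B}) ≃ ({c // c ∈ A'} ⊕ {c // c ∈ B'}),
    ∀ (b : Bool) x y, MRel A B b x y ↔ MRel A' B' b (g x) (g y)

lemma graphIso_iff_mIso (A B : Layer n) (A' B' : Layer m) :
    GraphIso ([A, B] : Net n) ([A', B'] : Net m) ↔ MIso A B A' B' := by
  constructor
  · rintro ⟨f, hf⟩
    refine ⟨((vE A B).symm.trans f).trans (vE A' B'), ?_⟩
    intro b x y
    have h1 := edge_model b ((vE A B).symm x) ((vE A B).symm y)
    rw [Equiv.apply_symm_apply, Equiv.apply_symm_apply] at h1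
    rw [← h1, hf b _ _]
    exact edge_model b _ _
  · rintro ⟨g, hg⟩
    refine ⟨((vE A B).trans g).trans (vE A' B').symm, ?_⟩
    intro b u v
    rw [edge_model b u v, hg b _ _]
    have h2 := edge_model b (((vE A B).trans g).trans (vE A' B').symm u)
      (((vE A B).trans g).trans (vE A' B').symm v)
    simp only [Equiv.trans_apply, Equiv.apply_symm_apply] at h2
    exact h2.symm

end Graph
-- Part 7: abstract cancellation of an isolated two-vertex component
section Cancel
variable {V₁ V₂ : Type*}

/-- relation on `V ⊕ Bool` : edges of V plus the special pair inr false → inr true -/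
def SRel {V : Type*} (r : Bool → V → V → Prop) (b : Bool) : (V ⊕ Bool) → (V ⊕ Bool) → Prop :=
  fun x y =>
    (∃ x' y', x = Sum.inl x' ∧ y = Sum.inl y' ∧ r b x' y') ∨
    (x = Sum.inr false ∧ y = Sum.inr true)

lemma SRel_inl {V : Type*} (r : Bool → V → V → Prop) (b : Bool) (x y : V) :
    SRel r b (Sum.inl x) (Sum.inl y) ↔ r b x y := by
  unfold SRel
  constructor
  · rintro (⟨x', y', hx, hy, hr⟩ | ⟨hx, _⟩)
    · rw [Sum.inl.injEq] at hx hy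
      rw [hx, hy]; exact hr
    · exact absurd hx (by simp)
  · intro h; exact Or.inl ⟨x, y, rfl, rfl, h⟩

lemma SRel_special {V : Type*} (r : Bool → V → V → Prop) (b : Bool) :
    SRel r b (Sum.inr false) (Sum.inr true) :=
  Or.inr ⟨rfl, rfl⟩

def Isolated {V : Type*} (r : Bool → V → V → Prop) : Prop :=
  ∀ u v : V, r false u v → r true u v →
    ∀ (b : Bool) (w : V), (r b u w → w = v) ∧ (r b w v → w = u) ∧ ¬ r b w u ∧ ¬ r b v w

lemma cancel_fixed (r₁ : Bool → V₁ → V₁ → Prop) (r₂ : Bool → V₂ → V₂ → Prop)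
    (G : (V₁ ⊕ Bool) ≃ (V₂ ⊕ Bool))
    (hG : ∀ b x y, SRel r₁ b x y ↔ SRel r₂ b (G x) (G y))
    (h0 : G (Sum.inr false) = Sum.inr false) (h1 : G (Sum.inr true) = Sum.inr true) :
    ∃ g : V₁ ≃ V₂, ∀ b x y, r₁ b x y ↔ r₂ b (g x) (g y) := by
  have hinl : ∀ x : V₁, ∃ y, G (Sum.inl x) = Sum.inl y := by
    intro x
    rcases h : G (Sum.inl x) with y | bb
    · exact ⟨y, rfl⟩
    · exfalso
      cases bb
      · rw [← h0] at h
        have := G.injective h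
        simp at this
      · rw [← h1] at h
        have := G.injective h
        simp at this
  have hs0 : G.symm (Sum.inr false) = Sum.inr false := by
    rw [← h0, Equiv.symm_apply_apply]
  have hs1 : G.symm (Sum.inr true) = Sum.inr true := by
    rw [← h1, Equiv.symm_apply_apply]
  have hinr : ∀ y : V₂, ∃ x, G.symm (Sum.inl y) = Sum.inl x := by
    intro y
    rcases h : G.symm (Sum.inl y) with x | bb
    · exact ⟨x, rfl⟩
    · exfalso
      cases bb
      · rw [← hs0] at h
        have := G.symm.injective h
        simp at this
      · rw [← hs1] at h
        have := G.symm.injective h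
        simp at this
  choose gf hgf using hinl
  choose gi hgi using hinr
  refine ⟨⟨gf, gi, ?_, ?_⟩, ?_⟩
  · intro x
    have h2 : G.symm (G (Sum.inl x)) = Sum.inl (gi (gf x)) := by
      rw [hgf x]; exact hgi (gf x)
    rw [Equiv.symm_apply_apply] at h2
    exact (Sum.inl_injective h2).symm
  · intro y
    have h2 : G (G.symm (Sum.inl y)) = Sum.inl (gf (gi y)) := by
      rw [hgi y]; exact hgf (gi y)
    rw [Equiv.apply_symm_apply] at h2
    exact (Sum.inl_injective h2).symm
  · intro b x y
    simp only [Equiv.coe_fn_mk]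
    rw [← SRel_inl r₁ b x y, hG b, hgf x, hgf y]
    exact SRel_inl r₂ b _ _

noncomputable def swapFun {V : Type*} (u v : V) : (V ⊕ Bool) → (V ⊕ Bool) := fun x =>
  if x = Sum.inl u then Sum.inr false
  else if x = Sum.inr false then Sum.inl u
  else if x = Sum.inl v then Sum.inr true
  else if x = Sum.inr true then Sum.inl v
  else x

lemma swapFun_invol {V : Type*} {u v : V} (huv : u ≠ v) :
    ∀ x, swapFun u v (swapFun u v x) = x := by
  intro x
  unfold swapFun
  by_cases h1 : x = Sum.inl u
  · subst h1; simp
  · by_cases h2 : x = Sum.inr false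
    · subst h2; simp
    · by_cases h3 : x = Sum.inl v
      · subst h3
        simp [Ne.symm huv]
      · by_cases h4 : x = Sum.inr true
        · subst h4
          simp [huv, Ne.symm huv]
        · simp [h1, h2, h3, h4]

lemma cancel (r₁ : Bool → V₁ → V₁ → Prop) (r₂ : Bool → V₂ → V₂ → Prop)
    (hiso : Isolated r₂)
    (G : (V₁ ⊕ Bool) ≃ (V₂ ⊕ Bool))
    (hG : ∀ b x y, SRel r₁ b x y ↔ SRel r₂ b (G x) (G y)) :
    ∃ g : V₁ ≃ V₂, ∀ b x y, r₁ b x y ↔ r₂ b (g x) (g y) := by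
  have hab : ∀ b : Bool, SRel r₂ b (G (Sum.inr false)) (G (Sum.inr true)) :=
    fun b => (hG b _ _).1 (SRel_special r₁ b)
  rcases ha : G (Sum.inr false) with u | ba
  · -- G maps the special pair to an inl pair (u, v) with r₂ both labels
    have hb : ∃ v, G (Sum.inr true) = Sum.inl v ∧ r₂ false u v ∧ r₂ true u v := by
      have h1 := hab false
      have h2 := hab true
      rw [ha] at h1 h2
      rcases h1 with ⟨x', y', hx, hy, hr⟩ | ⟨hx, _⟩
      · rcases h2 with ⟨x'', y'', hx2, hy2, hr2⟩ | ⟨hx2, _⟩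
        · rw [Sum.inl.injEq] at hx hx2
          refine ⟨y', hy, hx ▸ hr, ?_⟩
          rw [hy] at hy2
          rw [Sum.inl.injEq] at hy2
          rw [hx2, hy2]
          exact hr2
        · exact absurd hx2 (by simp)
      · exact absurd hx (by simp)
    obtain ⟨v, hbv, hrf, hrt⟩ := hb
    have huv : u ≠ v := by
      intro h
      subst h
      exact (hiso u u hrf hrt false u).2.2.2 hrf
    -- the swap automorphism
    set σfun := swapFun u v with hσ
    have hswap : ∀ b x y, SRel r₂ b x y → SRel r₂ b (σfun x) (σfun y) := by
      rintro b x y (⟨w, w', hx, hy, hr⟩ | ⟨hx, hy⟩)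
      · subst hx; subst hy
        by_cases hwu : w = u
        · have hw' : w' = v := (hiso u v hrf hrt b w').1 (hwu ▸ hr)
          rw [hwu, hw']
          have e1 : σfun (Sum.inl u) = Sum.inr false := by
            simp [hσ, swapFun]
          have e2 : σfun (Sum.inl v) = Sum.inr true := by
            simp [hσ, swapFun, Ne.symm huv]
          rw [e1, e2]
          exact SRel_special r₂ b
        · by_cases hwv : w = v
          · have hnr : ¬ r₂ b v w' := (hiso u v hrf hrt b w').2.2.2
            rw [← hwv] at hnr
            exact absurd hr hnr
          · have hw'u : w' ≠ u := fun h => (hiso u v hrf hrt b w).2.2.1 (h ▸ hr)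
            have hw'v : w' ≠ v := by
              intro h
              exact hwu ((hiso u v hrf hrt b w).2.1 (h ▸ hr))
            have e1 : σfun (Sum.inl w) = Sum.inl w := by
              simp [hσ, swapFun, hwu, hwv]
            have e2 : σfun (Sum.inl w') = Sum.inl w' := by
              simp [hσ, swapFun, hw'u, hw'v]
            rw [e1, e2]
            exact Or.inl ⟨w, w', rfl, rfl, hr⟩
      · subst hx; subst hy
        have e1 : σfun (Sum.inr false) = Sum.inl u := by
          simp [hσ, swapFun]
        have e2 : σfun (Sum.inr true) = Sum.inl v := by
          simp [hσ, swapFun, huv]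
        rw [e1, e2]
        refine Or.inl ⟨u, v, rfl, rfl, ?_⟩
        cases b
        · exact hrf
        · exact hrt
    have hσinv : ∀ x, σfun (σfun x) = x := swapFun_invol huv
    have hσiff : ∀ b x y, SRel r₂ b x y ↔ SRel r₂ b (σfun x) (σfun y) := by
      intro b x y
      constructor
      · exact hswap b x y
      · intro h
        have h2 := hswap b _ _ h
        rwa [hσinv, hσinv] at h2
    apply cancel_fixed r₁ r₂ (G.trans ⟨σfun, σfun, hσinv, hσinv⟩)
    · intro b x y
      rw [hG b x y]
      simp only [Equiv.trans_apply, Equiv.coe_fn_mk]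
      exact hσiff b _ _
    · simp only [Equiv.trans_apply, Equiv.coe_fn_mk, ha]
      simp [hσ, swapFun]
    · simp only [Equiv.trans_apply, Equiv.coe_fn_mk, hbv]
      simp [hσ, swapFun, Ne.symm huv]
  · -- G fixes the special vertices
    have hbtrue : G (Sum.inr true) = Sum.inr true := by
      have h1 := hab false
      rw [ha] at h1
      rcases h1 with ⟨x', y', hx, _, _⟩ | ⟨hx, hy⟩
      · exact absurd hx (by simp)
      · rw [Sum.inr.injEq] at hx
        rw [hy]
    have hafalse : G (Sum.inr false) = Sum.inr false := by
      have h1 := hab false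
      rw [ha, hbtrue] at h1
      rcases h1 with ⟨x', y', hx, _, _⟩ | ⟨hx, _⟩
      · exact absurd hx (by simp)
      · rw [ha, hx]
    exact cancel_fixed r₁ r₂ G hG hafalse hbtrue

end Cancel
-- Part 8: channel embedding ψ and layer strip/embed
section Psi
variable {m : ℕ}

def ψf (m i : ℕ) : Fin m → Fin (m + 2) := fun k =>
  if k.val < 2 * i then ⟨k.val, by omega⟩ else ⟨k.val + 2, by omega⟩

lemma ψf_val (i : ℕ) (k : Fin m) :
    (ψf m i k).val = if k.val < 2 * i then k.val else k.val + 2 := by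
  unfold ψf
  split <;> rfl

lemma ψf_inj (i : ℕ) : Function.Injective (ψf m i) := by
  intro a b h
  have hv : (ψf m i a).val = (ψf m i b).val := congrArg Fin.val h
  rw [ψf_val, ψf_val] at hv
  apply Fin.ext
  by_cases h1 : a.val < 2 * i <;> by_cases h2 : b.val < 2 * i
  · rw [if_pos h1, if_pos h2] at hv; omega
  · rw [if_pos h1, if_neg h2] at hv; omega
  · rw [if_neg h1, if_pos h2] at hv; omega
  · rw [if_neg h1, if_neg h2] at hv; omega

lemma ψf_avoid (i : ℕ) (k : Fin m) : (ψf m i k).val ≠ 2 * i ∧ (ψf m i k).val ≠ 2 * i + 1 := by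
  have h := ψf_val i k
  constructor <;> (intro hh; split at h <;> omega)

lemma ψf_parity (i : ℕ) (k : Fin m) : (ψf m i k).val % 2 = k.val % 2 := by
  have := ψf_val i k
  split at this <;> omega

lemma ψf_surj (i : ℕ) (hi : 2 * i + 1 < m + 2) (j : Fin (m + 2))
    (h1 : j.val ≠ 2 * i) (h2 : j.val ≠ 2 * i + 1) : ∃ k, ψf m i k = j := by
  by_cases h : j.val < 2 * i
  · refine ⟨⟨j.val, by omega⟩, ?_⟩
    apply Fin.ext
    rw [ψf_val]
    simp only []
    split <;> omega
  · refine ⟨⟨j.val - 2, by omega⟩, ?_⟩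
    apply Fin.ext
    rw [ψf_val]
    simp only []
    split <;> omega

def ψc (m i : ℕ) : Comp m → Comp (m + 2) := fun c => (ψf m i c.1, ψf m i c.2)

lemma ψc_inj (i : ℕ) : Function.Injective (ψc m i) := by
  intro a b h
  unfold ψc at h
  have h1 := congrArg Prod.fst h
  have h2 := congrArg Prod.snd h
  exact Prod.ext (ψf_inj i h1) (ψf_inj i h2)

lemma ψf_mono (i : ℕ) {a b : Fin m} (h : a < b) : ψf m i a < ψf m i b := by
  have ha := ψf_val i a
  have hb := ψf_val i b
  rw [Fin.lt_def] at h ⊢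
  split at ha <;> split at hb <;> omega

/-- ψc maps F-comparators to F-comparators -/
lemma ψc_F (i : ℕ) {c : Comp m} (hc : c ∈ FLayer m) : ψc m i c ∈ FLayer (m + 2) := by
  obtain ⟨h1, h2⟩ := mem_FLayer.1 hc
  apply mem_FLayer.2
  have ha := ψf_val i c.1
  have hb := ψf_val i c.2
  have hp := ψf_parity i c.1
  constructor
  · show (ψf m i c.1).val % 2 = 0
    omega
  · show (ψf m i c.2).val = (ψf m i c.1).val + 1
    split at ha <;> split at hb <;> omega

/-- preimage of an F-comparator avoiding the dup channels -/
lemma ψc_F_surj (i : ℕ) (hi : 2 * i + 1 < m + 2) {e : Comp (m + 2)}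
    (he : e ∈ FLayer (m + 2))
    (h1 : e.1.val ≠ 2 * i) (h2 : e.2.val ≠ 2 * i + 1) :
    ∃ c ∈ FLayer m, ψc m i c = e := by
  obtain ⟨hp, hs⟩ := mem_FLayer.1 he
  have h1' : e.1.val ≠ 2 * i + 1 := by omega
  have h2' : e.2.val ≠ 2 * i := by omega
  obtain ⟨k1, hk1⟩ := ψf_surj i hi e.1 h1 h1'
  obtain ⟨k2, hk2⟩ := ψf_surj i hi e.2 h2' h2
  refine ⟨(k1, k2), ?_, ?_⟩
  · apply mem_FLayer.2
    have v1 := ψf_val i k1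
    have v2 := ψf_val i k2
    rw [hk1] at v1
    rw [hk2] at v2
    constructor
    · show k1.val % 2 = 0
      split at v1 <;> omega
    · show k2.val = k1.val + 1
      split at v1 <;> split at v2 <;> omega
  · unfold ψc
    rw [hk1, hk2]

lemma outChan_ψc (i : ℕ) (b : Bool) (c : Comp m) :
    outChan (ψc m i c) b = ψf m i (outChan c b) := by
  cases b <;> rfl

lemma match_ψc (i : ℕ) (b : Bool) (c d : Comp m) :
    Match b (ψc m i c) (ψc m i d) ↔ Match b c d := by
  unfold Match
  rw [outChan_ψc]
  constructor
  · rintro (h | h)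
    · exact Or.inl (ψf_inj i h)
    · exact Or.inr (ψf_inj i h)
  · rintro (h | h)
    · exact Or.inl (congrArg (ψf m i) h)
    · exact Or.inr (congrArg (ψf m i) h)

lemma match_shared {k : ℕ} {c d : Comp k} (b : Bool) (h : Match b c d) :
    c.1 = d.1 ∨ c.1 = d.2 ∨ c.2 = d.1 ∨ c.2 = d.2 := by
  unfold Match outChan at h
  cases b
  · simp only [Bool.false_eq_true, if_neg] at h
    tauto
  · simp only [if_pos] at h
    tauto

/-- the stripped small layer -/
noncomputable def stripL (L : Layer (m + 2)) (d : Comp (m + 2)) (i : ℕ) : Layer m :=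
  Finset.univ.filter (fun c : Comp m => ψc m i c ∈ L.erase d)

lemma mem_stripL {L : Layer (m + 2)} {d : Comp (m + 2)} {i : ℕ} {c : Comp m} :
    c ∈ stripL L d i ↔ ψc m i c ∈ L.erase d := by
  unfold stripL
  simp

lemma stripL_isLayer {L : Layer (m + 2)} (hL : IsLayer L) (d : Comp (m + 2)) (i : ℕ) :
    IsLayer (stripL L d i) := by
  constructor
  · intro c hc
    have h : ψf m i c.1 < ψf m i c.2 := hL.1 _ (Finset.mem_of_mem_erase (mem_stripL.1 hc))
    by_contra hlt
    push_neg at hlt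
    rcases lt_or_eq_of_le hlt with h2 | h2
    · exact absurd (ψf_mono i h2) (asymm h)
    · rw [h2] at h
      exact lt_irrefl _ h
  · intro c hc c' hc' hne
    have g := hL.2 _ (Finset.mem_of_mem_erase (mem_stripL.1 hc))
      _ (Finset.mem_of_mem_erase (mem_stripL.1 hc')) (fun hh => hne (ψc_inj i hh))
    refine ⟨?_, ?_, ?_, ?_⟩
    · exact fun hh => g.1 (congrArg (ψf m i) hh)
    · exact fun hh => g.2.1 (congrArg (ψf m i) hh)
    · exact fun hh => g.2.2.1 (congrArg (ψf m i) hh)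
    · exact fun hh => g.2.2.2 (congrArg (ψf m i) hh)

/-- the embedded big layer, with duplicate at pair i -/
noncomputable def embedL (M : Layer m) (d : Comp (m + 2)) (i : ℕ) : Layer (m + 2) :=
  insert d (M.image (ψc m i))

lemma embedL_not_mem_image (M : Layer m) {d : Comp (m + 2)} (i : ℕ)
    (hd1 : d.1.val = 2 * i) : d ∉ M.image (ψc m i) := by
  rw [Finset.mem_image]
  rintro ⟨c, _, hc⟩
  have h1 := ψf_avoid i c.1
  have e1 : ψf m i c.1 = d.1 := congrArg Prod.fst hc
  rw [Fin.ext_iff] at e1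
  omega

lemma stripL_embedL (M : Layer m) {d : Comp (m + 2)} (i : ℕ) (hd1 : d.1.val = 2 * i) :
    stripL (embedL M d i) d i = M := by
  have hdn : d ∉ M.image (ψc m i) := embedL_not_mem_image M i hd1
  apply Finset.ext
  intro c
  rw [mem_stripL]
  unfold embedL
  rw [Finset.erase_insert hdn, Finset.mem_image]
  constructor
  · rintro ⟨c', hc', he⟩
    rw [← ψc_inj i he]
    exact hc'
  · intro h
    exact ⟨c, h, rfl⟩

end Psi
-- Part 9: decomposition of a redundant net into small net ⊕ duplicate component
section Decomp
variable {m : ℕ}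

noncomputable def ΦE (L : Layer (m + 2)) (d : Comp (m + 2)) (i : ℕ)
    (hdF : d ∈ FLayer (m + 2)) (hdL : d ∈ L) :
    (({c // c ∈ FLayer m} ⊕ {c // c ∈ stripL L d i}) ⊕ Bool) →
      ({c // c ∈ FLayer (m + 2)} ⊕ {c // c ∈ L})
  | Sum.inl (Sum.inl c) => Sum.inl ⟨ψc m i c.val, ψc_F i c.property⟩
  | Sum.inl (Sum.inr c) => Sum.inr ⟨ψc m i c.val,
      Finset.mem_of_mem_erase (mem_stripL.1 c.property)⟩
  | Sum.inr false => Sum.inl ⟨d, hdF⟩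
  | Sum.inr true => Sum.inr ⟨d, hdL⟩

lemma decomp_dict {L : Layer (m + 2)} (hL : IsLayer L) {d : Comp (m + 2)}
    (hdF : d ∈ FLayer (m + 2)) (hdL : d ∈ L) {i : ℕ}
    (hd1 : d.1.val = 2 * i) (hd2 : d.2.val = 2 * i + 1) :
    ∃ E : ({c // c ∈ FLayer (m + 2)} ⊕ {c // c ∈ L}) ≃
        (({c // c ∈ FLayer m} ⊕ {c // c ∈ stripL L d i}) ⊕ Bool),
      ∀ (b : Bool) x y, MRel (FLayer (m + 2)) L b x y ↔
        SRel (MRel (FLayer m) (stripL L d i)) b (E x) (E y) := by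
  have hi : 2 * i + 1 < m + 2 := by
    have := d.2.isLt
    omega
  have hψd : ∀ c : Comp m, ψc m i c ≠ d := by
    intro c h
    have h1 := (ψf_avoid i c.1).1
    have e1 : ψf m i c.1 = d.1 := congrArg Prod.fst h
    rw [Fin.ext_iff] at e1
    omega
  have hmatch1 : ∀ (c : Comp m) (b : Bool), ¬ Match b (ψc m i c) d := by
    intro c b hm
    have hav := ψf_avoid i (outChan c b)
    rcases hm with h | h <;>
      (rw [outChan_ψc, Fin.ext_iff] at h; omega)
  have hmatch2 : ∀ (c : Comp m) (b : Bool), ¬ Match b d (ψc m i c) := by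
    intro c b hm
    have hav1 := ψf_avoid i c.1
    have hav2 := ψf_avoid i c.2
    have hoc : (outChan d b).val = 2 * i ∨ (outChan d b).val = 2 * i + 1 := by
      cases b
      · exact Or.inl hd1
      · exact Or.inr hd2
    rcases hm with h | h
    · have hval : (outChan d b).val = (ψf m i c.1).val := congrArg Fin.val h
      omega
    · have hval : (outChan d b).val = (ψf m i c.2).val := congrArg Fin.val h
      omega
  set Φ := ΦE L d i hdF hdL with hΦ
  have hinj : Function.Injective Φ := by
    rintro (( c | c ) | bx) (( c' | c' ) | by') h <;>
      simp only [hΦ, ΦE] at h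
    · rw [Sum.inl.injEq, Subtype.mk.injEq] at h
      rw [Subtype.ext (ψc_inj i h)]
    · exact absurd h (by simp)
    · cases by'
      · rw [Sum.inl.injEq, Subtype.mk.injEq] at h
        exact absurd h (hψd c.val)
      · exact absurd h (by simp)
    · exact absurd h (by simp)
    · rw [Sum.inr.injEq, Subtype.mk.injEq] at h
      rw [Subtype.ext (ψc_inj i h)]
    · cases by'
      · exact absurd h (by simp)
      · rw [Sum.inr.injEq, Subtype.mk.injEq] at h
        exact absurd h (hψd c.val)
    · cases bx
      · rw [Sum.inl.injEq, Subtype.mk.injEq] at h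
        exact absurd h.symm (hψd c'.val)
      · exact absurd h (by simp)
    · cases bx
      · exact absurd h (by simp)
      · rw [Sum.inr.injEq, Subtype.mk.injEq] at h
        exact absurd h.symm (hψd c'.val)
    · cases bx <;> cases by' <;> simp_all
  have hsurj : Function.Surjective Φ := by
    rintro (⟨e, he⟩ | ⟨e, he⟩)
    · by_cases hed : e = d
      · exact ⟨Sum.inr false, by simp only [hΦ, ΦE]; rw [Sum.inl.injEq]; exact Subtype.ext hed.symm⟩
      · have hch := FLayer_isLayer.2 e he d hdF hed
        have h1 : e.1.val ≠ 2 * i := by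
          rw [← hd1]
          intro hh
          exact hch.1 (Fin.ext hh)
        have h2 : e.2.val ≠ 2 * i + 1 := by
          rw [← hd2]
          intro hh
          exact hch.2.2.2 (Fin.ext hh)
        obtain ⟨c, hcF, hce⟩ := ψc_F_surj i hi he h1 h2
        exact ⟨Sum.inl (Sum.inl ⟨c, hcF⟩),
          by simp only [hΦ, ΦE]; rw [Sum.inl.injEq]; exact Subtype.ext hce⟩
    · by_cases hed : e = d
      · exact ⟨Sum.inr true, by simp only [hΦ, ΦE]; rw [Sum.inr.injEq]; exact Subtype.ext hed.symm⟩
      · have hch := hL.2 e he d hdL hed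
        have g1 : e.1.val ≠ 2 * i := fun hh => hch.1 (by rw [Fin.ext_iff, hd1]; exact hh)
        have g2 : e.1.val ≠ 2 * i + 1 := fun hh => hch.2.1 (by rw [Fin.ext_iff, hd2]; exact hh)
        have g3 : e.2.val ≠ 2 * i := fun hh => hch.2.2.1 (by rw [Fin.ext_iff, hd1]; exact hh)
        have g4 : e.2.val ≠ 2 * i + 1 := fun hh => hch.2.2.2 (by rw [Fin.ext_iff, hd2]; exact hh)
        obtain ⟨k1, hk1⟩ := ψf_surj i hi e.1 g1 g2
        obtain ⟨k2, hk2⟩ := ψf_surj i hi e.2 g3 g4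
        have hcomp : ψc m i (k1, k2) = e := by
          unfold ψc
          rw [hk1, hk2]
        have hmem : (k1, k2) ∈ stripL L d i := by
          rw [mem_stripL, hcomp]
          exact Finset.mem_erase.2 ⟨hed, he⟩
        exact ⟨Sum.inl (Sum.inr ⟨(k1, k2), hmem⟩),
          by simp only [hΦ, ΦE]; rw [Sum.inr.injEq]; exact Subtype.ext hcomp⟩
  have hdict : ∀ (b : Bool) x y, MRel (FLayer (m + 2)) L b (Φ x) (Φ y) ↔
      SRel (MRel (FLayer m) (stripL L d i)) b x y := by
    rintro b (( c | c ) | bx) (( c' | c' ) | by') <;>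
      simp only [hΦ, ΦE]
    · show False ↔ _
      rw [SRel_inl]
      exact Iff.rfl
    · show Match b (ψc m i c.val) (ψc m i c'.val) ↔ _
      rw [SRel_inl, match_ψc]
      exact Iff.rfl
    · cases by'
      · show False ↔ _
        simp [SRel]
      · show Match b (ψc m i c.val) d ↔ _
        constructor
        · intro h; exact absurd h (hmatch1 c.val b)
        · intro h
          exfalso
          rcases h with ⟨_, _, _, hy, _⟩ | ⟨hx, _⟩
          · exact absurd hy (by simp)
          · exact absurd hx (by simp)
    · show False ↔ _
      rw [SRel_inl]
      exact Iff.rfl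
    · show False ↔ _
      rw [SRel_inl]
      exact Iff.rfl
    · cases by'
      · show False ↔ _
        simp [SRel]
      · show False ↔ _
        simp [SRel]
    · cases bx
      · show False ↔ _
        simp [SRel]
      · show False ↔ _
        simp [SRel]
    · cases bx
      · show Match b d (ψc m i c'.val) ↔ _
        constructor
        · intro h; exact absurd h (hmatch2 c'.val b)
        · intro h
          exfalso
          rcases h with ⟨_, _, hx, _, _⟩ | ⟨_, hy⟩
          · exact absurd hx (by simp)
          · exact absurd hy (by simp)
      · show False ↔ _
        simp [SRel]
    · cases bx <;> cases by'
      · show False ↔ _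
        simp [SRel]
      · show Match b d d ↔ _
        constructor
        · intro _
          exact SRel_special _ b
        · intro _
          cases b
          · exact Or.inl rfl
          · exact Or.inr rfl
      · show False ↔ _
        simp [SRel]
      · show False ↔ _
        simp [SRel]
  refine ⟨(Equiv.ofBijective Φ ⟨hinj, hsurj⟩).symm, ?_⟩
  intro b x y
  obtain ⟨x', rfl⟩ := hsurj x
  obtain ⟨y', rfl⟩ := hsurj y
  have ex : (Equiv.ofBijective Φ ⟨hinj, hsurj⟩).symm (Φ x') = x' := by
    apply (Equiv.ofBijective Φ ⟨hinj, hsurj⟩).injective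
    rw [Equiv.apply_symm_apply]
    rfl
  have ey : (Equiv.ofBijective Φ ⟨hinj, hsurj⟩).symm (Φ y') = y' := by
    apply (Equiv.ofBijective Φ ⟨hinj, hsurj⟩).injective
    rw [Equiv.apply_symm_apply]
    rfl
  rw [ex, ey]
  exact hdict b x' y'

/-- the duplicate components in the model are isolated -/
lemma mrel_isolated {M : Layer m} (hM : IsLayer M) :
    Isolated (MRel (FLayer m) M) := by
  rintro (cF | cM) (dF | dM) hrf hrt
  · exact hrf.elim
  · -- main case
    have hsharef : cF.val.1 = dM.val.1 ∨ cF.val.1 = dM.val.2 := hrf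
    have hsharet : cF.val.2 = dM.val.1 ∨ cF.val.2 = dM.val.2 := hrt
    have hcF := mem_FLayer.1 cF.property
    have hdlt : dM.val.1 < dM.val.2 := hM.1 _ dM.property
    have hflt : cF.val.1 < cF.val.2 := FLayer_isLayer.1 _ cF.property
    have heq : dM.val = cF.val := by
      rcases hsharef with h1 | h1
      · rcases hsharet with h2 | h2
        · exfalso
          rw [← h2] at h1
          exact ne_of_lt hflt h1
        · exact (Prod.ext h1 h2).symm
      · exfalso
        rcases hsharet with h2 | h2
        · rw [Fin.lt_def] at hdlt hflt
          rw [Fin.ext_iff] at h1 h2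
          omega
        · rw [← h2] at h1
          exact ne_of_lt hflt h1
    intro b w
    refine ⟨?_, ?_, ?_, ?_⟩
    · rintro hw
      rcases w with eF | eM
      · exact hw.elim
      · have hsh := match_shared b hw
        rw [← heq] at hsh
        have : dM.val = eM.val := by
          apply eq_of_shared hM.2 dM.property eM.property
          tauto
        rw [Sum.inr.injEq]
        exact (Subtype.ext this).symm
    · rintro hw
      rcases w with eF | eM
      · have hsh := match_shared b hw
        have : eF.val = cF.val := by
          apply eq_of_shared FLayer_isLayer.2 eF.property cF.property
          rw [heq] at hsh
          tauto
        rw [Sum.inl.injEq]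
        exact Subtype.ext this
      · exact hw.elim
    · rintro hw
      rcases w with eF | eM <;> exact hw.elim
    · rintro hw
      rcases w with eF | eM <;> exact hw.elim
  · exact hrf.elim
  · exact hrf.elim

end Decomp
-- Part 10: assembly
section Assemble
variable {m : ℕ}

lemma graphIso_symm {k l : ℕ} {C : Net k} {D : Net l} (h : GraphIso C D) : GraphIso D C := by
  obtain ⟨f, hf⟩ := h
  refine ⟨f.symm, fun b u v => ?_⟩
  have h2 := hf b (f.symm u) (f.symm v)
  rw [Equiv.apply_symm_apply, Equiv.apply_symm_apply] at h2
  exact h2.symm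

lemma exists_minDup {L : Layer (m + 2)} (hdup : ∃ d ∈ FLayer (m + 2), d ∈ L) :
    ∃ d : Comp (m + 2), (d ∈ FLayer (m + 2) ∧ d ∈ L) ∧
      ∀ e ∈ FLayer (m + 2), e ∈ L → d.1 ≤ e.1 := by
  obtain ⟨d0, hd0F, hd0L⟩ := hdup
  set D := FLayer (m + 2) ∩ L with hD
  have hne : D.Nonempty := ⟨d0, Finset.mem_inter.2 ⟨hd0F, hd0L⟩⟩
  have hne' : (D.image Prod.fst).Nonempty := hne.image _
  set idx := (D.image Prod.fst).min' hne' with hidx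
  have hmem := Finset.min'_mem _ hne'
  rw [← hidx] at hmem
  obtain ⟨c, hcD, hc1⟩ := Finset.mem_image.1 hmem
  refine ⟨c, ⟨(Finset.mem_inter.1 hcD).1, (Finset.mem_inter.1 hcD).2⟩, ?_⟩
  intro e heF heL
  rw [hc1]
  exact Finset.min'_le _ _ (Finset.mem_image_of_mem _ (Finset.mem_inter.2 ⟨heF, heL⟩))

noncomputable def theD (L : Layer (m + 2)) (hL : IsLayer L)
    (hred : Redundant (FLayer (m + 2)) L) : Comp (m + 2) :=
  (exists_minDup ((redundant_iff_dup hL).1 hred)).choose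

lemma theD_spec (L : Layer (m + 2)) (hL : IsLayer L) (hred : Redundant (FLayer (m + 2)) L) :
    ((theD L hL hred ∈ FLayer (m + 2) ∧ theD L hL hred ∈ L) ∧
      ∀ e ∈ FLayer (m + 2), e ∈ L → (theD L hL hred).1 ≤ e.1) :=
  (exists_minDup ((redundant_iff_dup hL).1 hred)).choose_spec

noncomputable def theI (L : Layer (m + 2)) (hL : IsLayer L)
    (hred : Redundant (FLayer (m + 2)) L) : ℕ :=
  (theD L hL hred).1.val / 2

lemma theD_val (L : Layer (m + 2)) (hL : IsLayer L) (hred : Redundant (FLayer (m + 2)) L) :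
    (theD L hL hred).1.val = 2 * theI L hL hred ∧
    (theD L hL hred).2.val = 2 * theI L hL hred + 1 := by
  have h := mem_FLayer.1 (theD_spec L hL hred).1.1
  unfold theI
  omega

noncomputable def fHat : RedLayers (m + 2) → SecondLayers m := fun L =>
  ⟨stripL L.val (theD L.val L.2.1 L.2.2) (theI L.val L.2.1 L.2.2),
    stripL_isLayer L.2.1 _ _⟩

def d₀ : Comp (m + 2) := (⟨0, by omega⟩, ⟨1, by omega⟩)

lemma d₀_mem_F : (d₀ : Comp (m + 2)) ∈ FLayer (m + 2) := by
  apply mem_FLayer.2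
  exact ⟨rfl, rfl⟩

lemma embedL_isLayer {M : Layer m} (hM : IsLayer M) :
    IsLayer (embedL M (d₀ : Comp (m + 2)) 0) := by
  have himg : ∀ c ∈ M.image (ψc m 0), c.1.val ≥ 2 ∧ c.2.val ≥ 2 ∧
      ∃ c', c' ∈ M ∧ ψc m 0 c' = c := by
    intro c hc
    obtain ⟨c', hc', he⟩ := Finset.mem_image.1 hc
    have h1 : (ψf m 0 c'.1).val = c'.1.val + 2 := by
      rw [ψf_val]; simp
    have h2 : (ψf m 0 c'.2).val = c'.2.val + 2 := by
      rw [ψf_val]; simp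
    have e1 : ψf m 0 c'.1 = c.1 := congrArg Prod.fst he
    have e2 : ψf m 0 c'.2 = c.2 := congrArg Prod.snd he
    rw [Fin.ext_iff] at e1 e2
    exact ⟨by omega, by omega, c', hc', he⟩
  constructor
  · intro c hc
    unfold embedL at hc
    rcases Finset.mem_insert.1 hc with h | h
    · subst h
      show (0 : ℕ) < 1
      omega
    · obtain ⟨_, _, c', hc', he⟩ := himg c h
      rw [← he]
      exact ψf_mono 0 (hM.1 c' hc')
  · intro c hc c' hc' hne
    unfold embedL at hc hc'
    rcases Finset.mem_insert.1 hc with h | h <;> rcases Finset.mem_insert.1 hc' with h' | h'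
    · exact absurd (h.trans h'.symm) hne
    · obtain ⟨g1, g2, _⟩ := himg c' h'
      subst h
      refine ⟨?_, ?_, ?_, ?_⟩ <;> (intro hh; rw [Fin.ext_iff] at hh; simp [d₀] at hh; omega)
    · obtain ⟨g1, g2, _⟩ := himg c h
      subst h'
      refine ⟨?_, ?_, ?_, ?_⟩ <;> (intro hh; rw [Fin.ext_iff] at hh; simp only [d₀, Fin.val_mk] at hh; omega)
    · obtain ⟨_, _, e, heM, hee⟩ := himg c h
      obtain ⟨_, _, e', heM', hee'⟩ := himg c' h'
      rw [← hee, ← hee']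
      have hnee : e ≠ e' := by
        intro hh
        rw [hh] at hee
        exact hne (hee.symm.trans hee')
      have g := hM.2 e heM e' heM' hnee
      refine ⟨?_, ?_, ?_, ?_⟩
      · exact fun hh => g.1 (ψf_inj 0 hh)
      · exact fun hh => g.2.1 (ψf_inj 0 hh)
      · exact fun hh => g.2.2.1 (ψf_inj 0 hh)
      · exact fun hh => g.2.2.2 (ψf_inj 0 hh)

lemma embedL_red {M : Layer m} (hM : IsLayer M) :
    Redundant (FLayer (m + 2)) (embedL M (d₀ : Comp (m + 2)) 0) :=
  dup_redundant (embedL_isLayer hM) d₀_mem_F (Finset.mem_insert_self _ _)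

noncomputable def gHat : SecondLayers m → RedLayers (m + 2) := fun M =>
  ⟨embedL M.val d₀ 0, embedL_isLayer M.2, embedL_red M.2⟩

lemma theD_gHat (M : SecondLayers m) :
    theD (gHat M).val (gHat M).2.1 (gHat M).2.2 = d₀ := by
  have hspec := theD_spec (gHat M).val (gHat M).2.1 (gHat M).2.2
  have hmin := hspec.2 d₀ d₀_mem_F (Finset.mem_insert_self _ _)
  have h1 : (theD (gHat M).val (gHat M).2.1 (gHat M).2.2).1.val = 0 := by
    have := Fin.le_def.1 hmin
    simp only [d₀, Fin.val_mk] at this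
    omega
  have hF := mem_FLayer.1 hspec.1.1
  apply Prod.ext
  · exact Fin.ext h1
  · apply Fin.ext
    show _ = (1 : ℕ)
    omega

lemma fg_id (M : SecondLayers m) : fHat (gHat M) = M := by
  apply Subtype.ext
  show stripL (gHat M).val (theD (gHat M).val _ _) (theI (gHat M).val _ _) = M.val
  have hd := theD_gHat M
  have hi : theI (gHat M).val (gHat M).2.1 (gHat M).2.2 = 0 := by
    unfold theI
    rw [hd]
    simp [d₀]
  rw [hd, hi]
  exact stripL_embedL M.val 0 rfl

/-- value-preserving equiv from Finset equality -/
def finsetEqEquiv {α : Type*} {s t : Finset α} (h : s = t) : {c // c ∈ s} ≃ {c // c ∈ t} where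
  toFun c := ⟨c.val, h ▸ c.property⟩
  invFun c := ⟨c.val, h.symm ▸ c.property⟩
  left_inv c := rfl
  right_inv c := rfl

lemma mrel_strip_congr {k : ℕ} {A B B' : Layer k} (h : B = B') :
    ∀ (b : Bool) x y, MRel A B b x y ↔
      MRel A B' b ((Equiv.sumCongr (Equiv.refl _) (finsetEqEquiv h)) x)
        ((Equiv.sumCongr (Equiv.refl _) (finsetEqEquiv h)) y) := by
  rintro b (c | c) (c' | c') <;> exact Iff.rfl

lemma srel_map {V V' : Type*} {r : Bool → V → V → Prop} {r' : Bool → V' → V' → Prop}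
    (e : V ≃ V') (he : ∀ b x y, r b x y ↔ r' b (e x) (e y)) :
    ∀ (b : Bool) x y, SRel r b x y ↔ SRel r' b (Sum.map e id x) (Sum.map e id y) := by
  rintro b (x | bx) (y | by')
  · show SRel r b (Sum.inl x) (Sum.inl y) ↔ SRel r' b (Sum.inl (e x)) (Sum.inl (e y))
    rw [SRel_inl, SRel_inl]
    exact he b x y
  · show SRel r b _ (Sum.inr by') ↔ SRel r' b _ (Sum.inr by')
    unfold SRel
    simp
  · unfold SRel
    simp
  · unfold SRel
    simp

end Assemble
-- Part 11: the three transfer lemmas and the main theorem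
section Transfer
variable {m : ℕ}

lemma transferA (L L' : RedLayers (m + 2))
    (h : GraphIso ([FLayer (m + 2), L.val] : Net (m + 2)) [FLayer (m + 2), L'.val]) :
    GraphIso ([FLayer m, (fHat L).val] : Net m) [FLayer m, (fHat L').val] := by
  obtain ⟨Gm, hGm⟩ := (graphIso_iff_mIso _ _ _ _).1 h
  obtain ⟨E₁, hd₁⟩ := decomp_dict L.2.1 (theD_spec L.val L.2.1 L.2.2).1.1
    (theD_spec L.val L.2.1 L.2.2).1.2 (theD_val L.val L.2.1 L.2.2).1
    (theD_val L.val L.2.1 L.2.2).2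
  obtain ⟨E₂, hd₂⟩ := decomp_dict L'.2.1 (theD_spec L'.val L'.2.1 L'.2.2).1.1
    (theD_spec L'.val L'.2.1 L'.2.2).1.2 (theD_val L'.val L'.2.1 L'.2.2).1
    (theD_val L'.val L'.2.1 L'.2.2).2
  set G := (E₁.symm.trans Gm).trans E₂ with hG
  have hGd : ∀ b x y, SRel (MRel (FLayer m) (fHat L).val) b x y ↔
      SRel (MRel (FLayer m) (fHat L').val) b (G x) (G y) := by
    intro b x y
    have h1 := hd₁ b (E₁.symm x) (E₁.symm y)
    erw [Equiv.apply_symm_apply, Equiv.apply_symm_apply] at h1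
    exact h1.symm.trans ((hGm b _ _).trans (hd₂ b _ _))
  obtain ⟨g, hg⟩ := cancel _ _ (mrel_isolated (stripL_isLayer L'.2.1 _ _)) G hGd
  exact (graphIso_iff_mIso _ _ _ _).2 ⟨g, hg⟩

lemma dict_gHat (M : SecondLayers m) :
    ∃ E : ({c // c ∈ FLayer (m + 2)} ⊕ {c // c ∈ (gHat M).val}) ≃
        (({c // c ∈ FLayer m} ⊕ {c // c ∈ M.val}) ⊕ Bool),
      ∀ (b : Bool) x y, MRel (FLayer (m + 2)) (gHat M).val b x y ↔
        SRel (MRel (FLayer m) M.val) b (E x) (E y) := by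
  obtain ⟨E, hd⟩ := decomp_dict (gHat M).2.1 (d₀_mem_F (m := m))
    (Finset.mem_insert_self _ _) (show (d₀ : Comp (m+2)).1.val = 2 * 0 from rfl)
    (show (d₀ : Comp (m+2)).2.val = 2 * 0 + 1 from rfl)
  have hst : stripL (gHat M).val d₀ 0 = M.val := stripL_embedL M.val 0 rfl
  set K := Equiv.sumCongr (Equiv.refl ({c // c ∈ FLayer m})) (finsetEqEquiv hst) with hK
  refine ⟨E.trans (Equiv.sumCongr K (Equiv.refl Bool)), ?_⟩
  intro b x y
  rw [hd b x y]
  have hsm := srel_map K (mrel_strip_congr hst) b (E x) (E y)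
  rw [hsm]
  have he1 : ∀ z, (Equiv.sumCongr K (Equiv.refl Bool)) z = Sum.map K id z := by
    rintro (z | z) <;> rfl
  rw [Equiv.trans_apply, Equiv.trans_apply, he1, he1]

lemma transferB (M M' : SecondLayers m)
    (h : GraphIso ([FLayer m, M.val] : Net m) [FLayer m, M'.val]) :
    GraphIso ([FLayer (m + 2), (gHat M).val] : Net (m + 2)) [FLayer (m + 2), (gHat M').val] := by
  obtain ⟨g, hg⟩ := (graphIso_iff_mIso _ _ _ _).1 h
  obtain ⟨E₁, hd₁⟩ := dict_gHat M
  obtain ⟨E₂, hd₂⟩ := dict_gHat M'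
  apply (graphIso_iff_mIso _ _ _ _).2
  refine ⟨(E₁.trans (Equiv.sumCongr g (Equiv.refl Bool))).trans E₂.symm, ?_⟩
  intro b x y
  rw [hd₁ b x y]
  have hmap : ∀ z, (Equiv.sumCongr g (Equiv.refl Bool)) z = Sum.map g id z := by
    rintro (z | z) <;> rfl
  have hsm := srel_map g hg b (E₁ x) (E₁ y)
  rw [hsm]
  have h2 := hd₂ b (E₂.symm (Sum.map g id (E₁ x))) (E₂.symm (Sum.map g id (E₁ y)))
  rw [Equiv.apply_symm_apply, Equiv.apply_symm_apply] at h2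
  rw [← h2]
  simp only [Equiv.trans_apply, hmap]

lemma transferC (L : RedLayers (m + 2)) :
    GraphIso ([FLayer (m + 2), (gHat (fHat L)).val] : Net (m + 2)) [FLayer (m + 2), L.val] := by
  obtain ⟨E₁, hd₁⟩ := decomp_dict L.2.1 (theD_spec L.val L.2.1 L.2.2).1.1
    (theD_spec L.val L.2.1 L.2.2).1.2 (theD_val L.val L.2.1 L.2.2).1
    (theD_val L.val L.2.1 L.2.2).2
  obtain ⟨E₂, hd₂⟩ := dict_gHat (fHat L)
  apply (graphIso_iff_mIso _ _ _ _).2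
  refine ⟨E₂.trans E₁.symm, ?_⟩
  intro b x y
  rw [hd₂ b x y]
  have h2 := hd₁ b (E₁.symm (E₂ x)) (E₁.symm (E₂ y))
  erw [Equiv.apply_symm_apply, Equiv.apply_symm_apply] at h2
  exact h2.symm

end Transfer
/-- for n ≥ 5, the number of equivalence classes of redundant
two-layer networks on n channels with first layer `F_n` equals
`|R(G_{n-2})|`. -/
theorem numRedClasses_eq (n : ℕ) (h5 : 5 ≤ n) :
    numRedClasses n = numClasses (n - 2) := by
  obtain ⟨m, rfl⟩ : ∃ m, n = m + 2 := ⟨n - 2, by omega⟩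
  have hm : m + 2 - 2 = m := by omega
  rw [hm]
  unfold numRedClasses numClasses
  apply Nat.card_congr
  refine ⟨Quot.map fHat (fun L L' h => transferA L L' h),
          Quot.map gHat (fun M M' h => transferB M M' h), ?_, ?_⟩
  · intro q
    induction q using Quot.ind with
    | _ L =>
      show Quot.mk _ (gHat (fHat L)) = Quot.mk _ L
      exact Quot.sound (transferC L)
  · intro q
    induction q using Quot.ind with
    | _ M =>
      show Quot.mk _ (fHat (gHat M)) = Quot.mk _ M
      rw [fg_id]

end SN

-- axiom check
-- #print axioms SN.numRedClasses_eq
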